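/- arXiv:2604.23482 — 5 statements merged into one kernel-verified Lean document; each statement's English description precedes it below -/
import Mathlib

section
/- Let A ∈ M_r(𝔽₂) be a symmetric matrix over 𝔽₂ such that the sum of the entries in each row of A is zero (equivalently A·𝟏_r = 𝟎_r, where 𝟏_r is the all-ones vector), and assume rank_{𝔽₂}(A) = r − 1. Then rank_{𝔽₂}(A²) = r − 1 if r is odd, and rank_{𝔽₂}(A²) = r − 2 if r is even. -/
open LinearMap Submodule Module

set_option maxHeartbeats 1000000
set_option synthInstance.maxHeartbeats 200000

/-- If `A` is a symmetric `r × r` matrix over `𝔽₂` whose row sums are all zero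
(equivalently `A · 𝟏 = 0`) and `rank A = r - 1`, then `rank (A²) = r - 1` if `r` is odd
and `rank (A²) = r - 2` if `r` is even. -/
theorem stmt4 (r : ℕ) (A : Matrix (Fin r) (Fin r) (ZMod 2))
    (hsymm : A.IsSymm) (hrow : A.mulVec (fun _ => 1) = 0)
    (hrank : A.rank = r - 1) :
    (Odd r → (A * A).rank = r - 1) ∧ (Even r → (A * A).rank = r - 2) := by
  rcases Nat.eq_zero_or_pos r with hr0 | hrpos
  · subst hr0
    have h0 : (A * A).rank = 0 := Nat.le_zero.mp ((A*A).rank_le_card_height.trans (by simp))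
    exact ⟨fun _ => by rw [h0], fun _ => by rw [h0]⟩
  set f := A.mulVecLin with hf
  set one : Fin r → ZMod 2 := fun _ => 1 with hone
  -- the sum functional
  set φ : (Fin r → ZMod 2) →ₗ[ZMod 2] ZMod 2 := ∑ i, LinearMap.proj i with hφ
  have hφapp : ∀ x, φ x = ∑ i, x i := by
    intro x; simp [hφ, LinearMap.proj]
  have hrowj : ∀ j, ∑ k, A j k = 0 := by
    intro j
    have := congrFun hrow j
    simpa [Matrix.mulVec, dotProduct, hone, mul_one] using this
  have hsym : ∀ i j, A i j = A j i := fun i j => (Matrix.IsSymm.apply hsymm j i)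
  -- φ vanishes on the range of f
  have hφf : ∀ v, φ (f v) = 0 := by
    intro v
    rw [hφapp]
    have : ∀ i, f v i = ∑ j, A i j * v j := by
      intro i; simp [hf, Matrix.mulVecLin_apply, Matrix.mulVec, dotProduct]
    simp_rw [this]
    rw [Finset.sum_comm]
    refine Finset.sum_eq_zero fun j _ => ?_
    rw [← Finset.sum_mul]
    have : ∑ i, A i j = 0 := by
      rw [Finset.sum_congr rfl fun i _ => hsym i j]
      exact hrowj j
    rw [this, zero_mul]
  -- φ is surjective
  have hφsurj : LinearMap.range φ = ⊤ := by
    rw [eq_top_iff]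
    intro c _
    rcases ZMod.natCast_rightInverse (n := 2) c with _
    have : φ (c • Pi.single ⟨0, hrpos⟩ 1) = c := by
      rw [map_smul, hφapp]
      simp
    exact ⟨c • Pi.single ⟨0, hrpos⟩ 1, this⟩
  have hdim : finrank (ZMod 2) (Fin r → ZMod 2) = r := by simp
  have hkerφ : finrank (ZMod 2) (LinearMap.ker φ) = r - 1 := by
    have := LinearMap.finrank_range_add_finrank_ker φ
    rw [hφsurj, hdim] at this
    simp only [finrank_top] at this
    have h1 : finrank (ZMod 2) (ZMod 2) = 1 := finrank_self _
    omega
  -- range f = ker φ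
  have hW : LinearMap.range f = LinearMap.ker φ := by
    apply Submodule.eq_of_le_of_finrank_le
    · rintro x ⟨v, rfl⟩
      exact hφf v
    · have : finrank (ZMod 2) (LinearMap.range f) = r - 1 := hrank
      rw [hkerφ, this]
  -- ker f = span {one}
  have hone_ne : one ≠ 0 := by
    intro h
    have := congrFun h ⟨0, hrpos⟩
    simp [hone] at this
  have hone_ker : one ∈ LinearMap.ker f := by
    rw [LinearMap.mem_ker]
    exact hrow
  have hkerf : LinearMap.ker f = Submodule.span (ZMod 2) {one} := by
    symm
    apply Submodule.eq_of_le_of_finrank_le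
    · rw [Submodule.span_le, Set.singleton_subset_iff]; exact hone_ker
    · have h2 := LinearMap.finrank_range_add_finrank_ker f
      rw [hdim] at h2
      have h3 : finrank (ZMod 2) (LinearMap.range f) = r - 1 := hrank
      have h4 : finrank (ZMod 2) (Submodule.span (ZMod 2) {one}) = 1 :=
        finrank_span_singleton hone_ne
      omega
  -- 1 ∈ range f ↔ Even r
  have honeW : one ∈ LinearMap.range f ↔ Even r := by
    rw [hW, LinearMap.mem_ker, hφapp]
    have : (∑ _i : Fin r, (1 : ZMod 2)) = (r : ZMod 2) := by simp
    rw [show (∑ i : Fin r, one i) = (r : ZMod 2) by simp [hone]]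
    rw [ZMod.natCast_eq_zero_iff]
    exact ⟨fun h => even_iff_two_dvd.mpr h, fun h => even_iff_two_dvd.mp h⟩
  -- rank of A² via domRestrict
  set W := LinearMap.range f with hWdef
  have hrange2 : (A * A).rank = finrank (ZMod 2) (Submodule.map f W) := by
    rw [Matrix.rank, Matrix.mulVecLin_mul, LinearMap.range_comp]
  have hRN := LinearMap.finrank_range_add_finrank_ker (f.domRestrict W)
  rw [LinearMap.range_domRestrict, LinearMap.ker_domRestrict] at hRN
  have hWrank : finrank (ZMod 2) W = r - 1 := hrank
  constructor
  · intro hodd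
    have h1W : one ∉ W := by
      rw [honeW]
      exact Nat.not_even_iff_odd.mpr hodd
    have hkz : Submodule.comap W.subtype (LinearMap.ker f) = ⊥ := by
      rw [eq_bot_iff]
      rintro ⟨x, hxW⟩ hx
      simp only [Submodule.mem_comap, Submodule.coe_subtype] at hx
      rw [hkerf, Submodule.mem_span_singleton] at hx
      obtain ⟨c, hc⟩ := hx
      have hall : ∀ c : ZMod 2, c = 0 ∨ c = 1 := by decide
      simp only [Submodule.mem_bot]
      rcases hall c with hc0 | hc1
      · subst hc0
        rw [zero_smul] at hc
        exact Subtype.ext hc.symm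
      · exfalso
        subst hc1
        rw [one_smul] at hc
        rw [← hc] at hxW
        exact h1W hxW
    rw [hkz] at hRN
    simp only [finrank_bot] at hRN
    rw [hrange2]
    omega
  · intro heven
    have h1W : one ∈ W := honeW.mpr heven
    have hle : LinearMap.ker f ≤ W := by
      rw [hkerf, Submodule.span_le, Set.singleton_subset_iff]
      exact h1W
    have hkz : finrank (ZMod 2) (Submodule.comap W.subtype (LinearMap.ker f)) = 1 := by
      rw [(Submodule.comapSubtypeEquivOfLe hle).finrank_eq]
      rw [hkerf]
      exact finrank_span_singleton hone_ne
    rw [hkz] at hRN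
    have hr2 : 2 ≤ r := by
      rcases heven with ⟨k, hk⟩; omega
    rw [hrange2]
    omega
end

section
/- Let t be an odd positive integer and let p_1, …, p_t, q be distinct primes with p_i ≡ 5 (mod 8) for all i and q ≡ 7 (mod 8); assume rank_{𝔽₂}(A_P) = t − 1 where P = p_1⋯p_t, and Legendre symbol (p_i/q) = 1 for all i. Order the prime factors of n = Pq as ℓ_1 = p_1, …, ℓ_t = p_t, ℓ_{t+1} = q, and let M be the Monsky matrix of n. Then rank_{𝔽₂}(M) = 2t (so the 2-Selmer rank s_n = 2(t+1) − rank_{𝔽₂}(M) equals 2), and the null space of M in 𝔽₂^{2t+2} is spanned by Ψ(q, 1) and Ψ(P, P). -/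
open Finset Matrix



/-- The matrix `A` over `𝔽₂` attached to distinct odd primes `ℓ 0, …, ℓ (r-1)`:
off-diagonal entry `a_{ij}` is `1` iff the Legendre symbol `(ℓ j / ℓ i) = -1`,
and `a_{ii} = ∑_{j ≠ i} a_{ij}`. -/
noncomputable def APmat {r : ℕ} (ℓ : Fin r → ℕ) : Matrix (Fin r) (Fin r) (ZMod 2) :=
  fun i j =>
    if i = j then ∑ k ∈ univ.erase i, (if jacobiSym (ℓ k) (ℓ i) = -1 then (1 : ZMod 2) else 0)
    else if jacobiSym (ℓ j) (ℓ i) = -1 then 1 else 0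

/-- The diagonal matrix `D_l` with `(D_l)_{ii} = φ((l / ℓ i))`. -/
noncomputable def monskyD {r : ℕ} (l : ℤ) (ℓ : Fin r → ℕ) : Matrix (Fin r) (Fin r) (ZMod 2) :=
  Matrix.diagonal fun i => if jacobiSym l (ℓ i) = -1 then 1 else 0

/-- The Monsky matrix `[[A + D₂, D₂], [D₂, A + D₋₂]]` of the squarefree odd number
`ℓ 0 ⋯ ℓ (r-1)`. -/
noncomputable def monsky {r : ℕ} (ℓ : Fin r → ℕ) :
    Matrix (Fin r ⊕ Fin r) (Fin r ⊕ Fin r) (ZMod 2) :=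
  Matrix.fromBlocks (APmat ℓ + monskyD 2 ℓ) (monskyD 2 ℓ)
    (monskyD 2 ℓ) (APmat ℓ + monskyD (-2) ℓ)

/-- The exponent vector of a positive divisor `u` of `ℓ 0 ⋯ ℓ (r-1)`. -/
def expVec {r : ℕ} (ℓ : Fin r → ℕ) (u : ℕ) : Fin r → ZMod 2 :=
  fun i => if ℓ i ∣ u then 1 else 0

/-- `Ψ(u, u') = (ε(u), ε(u')) ∈ 𝔽₂^{2r}`. -/
def psiVec {r : ℕ} (ℓ : Fin r → ℕ) (u u' : ℕ) : (Fin r ⊕ Fin r) → ZMod 2 :=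
  Sum.elim (expVec ℓ u) (expVec ℓ u')

lemma zmod2_add_eq_zero {a b : ZMod 2} : a + b = 0 ↔ a = b := by revert a b; decide
lemma zmod2_cases (c : ZMod 2) : c = 0 ∨ c = 1 := by revert c; decide
lemma zmod2_solve {a b c : ZMod 2} (h : b + a + c = 0) : a = b + c := by revert a b c; decide
lemma zmod2_solve' {a b c : ZMod 2} (h : a + b + c = 0) : a = b + c := by revert a b c; decide

lemma jac_two_of_five {n : ℕ} (h : n % 8 = 5) : jacobiSym 2 n = -1 := by
  rw [jacobiSym.at_two (Nat.odd_iff.mpr (by omega)), ZMod.χ₈_nat_eq_if_mod_eight,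
    if_neg (by omega), if_neg (by omega)]

lemma jac_neg_two_of_five {n : ℕ} (h : n % 8 = 5) : jacobiSym (-2) n = -1 := by
  rw [jacobiSym.at_neg_two (Nat.odd_iff.mpr (by omega)), ZMod.χ₈'_nat_eq_if_mod_eight,
    if_neg (by omega), if_neg (by omega)]

lemma jac_two_of_seven {n : ℕ} (h : n % 8 = 7) : jacobiSym 2 n = 1 := by
  rw [jacobiSym.at_two (Nat.odd_iff.mpr (by omega)), ZMod.χ₈_nat_eq_if_mod_eight,
    if_neg (by omega), if_pos (by omega)]

lemma jac_neg_two_of_seven {n : ℕ} (h : n % 8 = 7) : jacobiSym (-2) n = -1 := by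
  rw [jacobiSym.at_neg_two (Nat.odd_iff.mpr (by omega)), ZMod.χ₈'_nat_eq_if_mod_eight,
    if_neg (by omega), if_neg (by omega)]

lemma jac_swap {a b : ℕ} (ha : a % 4 = 1) (hb : Odd b) :
    jacobiSym a b = jacobiSym b a :=
  jacobiSym.quadratic_reciprocity_one_mod_four ha hb

lemma zmod2_add_self (x : ZMod 2) : x + x = 0 := by revert x; decide

lemma APmat_offdiag {r : ℕ} (ℓ : Fin r → ℕ) {i j : Fin r} (h : i ≠ j) :
    APmat ℓ i j = if jacobiSym (ℓ j) (ℓ i) = -1 then 1 else 0 := by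
  simp only [APmat, if_neg h]

lemma APmat_diag {r : ℕ} (ℓ : Fin r → ℕ) (i : Fin r) :
    APmat ℓ i i = ∑ k ∈ univ.erase i, (if jacobiSym (ℓ k) (ℓ i) = -1 then (1 : ZMod 2) else 0) := by
  simp only [APmat, if_true]

lemma APmat_erase_sum {r : ℕ} (ℓ : Fin r → ℕ) (i : Fin r) :
    ∑ j ∈ univ.erase i, APmat ℓ i j = APmat ℓ i i := by
  rw [APmat_diag]
  refine Finset.sum_congr rfl fun j hj => ?_
  exact APmat_offdiag ℓ (Ne.symm (Finset.mem_erase.mp hj).1)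

lemma APmat_rowsum {r : ℕ} (ℓ : Fin r → ℕ) (i : Fin r) : ∑ j, APmat ℓ i j = 0 := by
  rw [← Finset.add_sum_erase _ _ (Finset.mem_univ i), APmat_erase_sum, zmod2_add_self]

lemma APmat_mulVec_one {r : ℕ} (ℓ : Fin r → ℕ) :
    APmat ℓ *ᵥ (fun _ => (1 : ZMod 2)) = 0 := by
  funext i
  simp only [Matrix.mulVec, dotProduct, mul_one, Pi.zero_apply]
  exact APmat_rowsum ℓ i

lemma APmat_symm {r : ℕ} {ℓ : Fin r → ℕ}
    (hrec : ∀ i j, jacobiSym (ℓ j) (ℓ i) = jacobiSym (ℓ i) (ℓ j)) (i j : Fin r) :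
    APmat ℓ i j = APmat ℓ j i := by
  rcases eq_or_ne i j with rfl | h
  · rfl
  · rw [APmat_offdiag ℓ h, APmat_offdiag ℓ h.symm, hrec]

lemma APmat_colsum {r : ℕ} {ℓ : Fin r → ℕ}
    (hrec : ∀ i j, jacobiSym (ℓ j) (ℓ i) = jacobiSym (ℓ i) (ℓ j)) (j : Fin r) :
    ∑ i, APmat ℓ i j = 0 := by
  rw [Finset.sum_congr rfl fun i _ => APmat_symm hrec i j]
  exact APmat_rowsum ℓ j

lemma ker_APmat_eq_span {t : ℕ} (ht : 0 < t) (B : Matrix (Fin t) (Fin t) (ZMod 2))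
    (hrank : B.rank = t - 1) (hone : B *ᵥ (fun _ => 1) = 0) :
    LinearMap.ker B.mulVecLin =
      Submodule.span (ZMod 2) {(fun _ => 1 : Fin t → ZMod 2)} := by
  have h1 : (fun _ => (1 : ZMod 2) : Fin t → ZMod 2) ≠ 0 := by
    intro h
    have := congrFun h ⟨0, ht⟩
    simpa using this
  have hle : Submodule.span (ZMod 2) {(fun _ => 1 : Fin t → ZMod 2)} ≤
      LinearMap.ker B.mulVecLin := by
    rw [Submodule.span_singleton_le_iff_mem]
    exact LinearMap.mem_ker.mpr (by simpa [Matrix.mulVecLin_apply] using hone)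
  have hrn := LinearMap.finrank_range_add_finrank_ker B.mulVecLin
  rw [Module.finrank_fintype_fun_eq_card, Fintype.card_fin] at hrn
  have hr : B.rank = Module.finrank (ZMod 2) (LinearMap.range B.mulVecLin) := rfl
  have hk : Module.finrank (ZMod 2) (LinearMap.ker B.mulVecLin) = 1 := by omega
  symm
  exact Submodule.eq_of_le_of_finrank_eq hle (by rw [finrank_span_singleton h1, hk])

lemma one_notin_range {t : ℕ} (ht : Odd t) (B : Matrix (Fin t) (Fin t) (ZMod 2))
    (hcol : ∀ j, ∑ i, B i j = 0) :
    (fun _ => (1 : ZMod 2)) ∉ LinearMap.range B.mulVecLin := by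
  rintro ⟨x, hx⟩
  have h := congrArg (fun v : Fin t → ZMod 2 => ∑ i, v i) hx
  simp only [Matrix.mulVecLin_apply, Matrix.mulVec, dotProduct] at h
  rw [Finset.sum_comm] at h
  simp only [← Finset.sum_mul, Finset.sum_congr rfl fun j (_ : j ∈ univ) => congrArg (· * x j) (hcol j)] at h
  have ht1 : ((t : ℕ) : ZMod 2) = 1 := by
    rw [← ZMod.natCast_mod t 2, Nat.odd_iff.mp ht]; rfl
  simp [ht1] at h

lemma erase_sum_char2 {α : Type*} [Fintype α] [DecidableEq α] (f : α → ZMod 2) (i : α) :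
    ∑ k ∈ univ.erase i, f k = (∑ k, f k) + f i := by
  conv_rhs => rw [← Finset.add_sum_erase _ f (Finset.mem_univ i)]
  rw [show f i + ∑ k ∈ univ.erase i, f k + f i
      = ∑ k ∈ univ.erase i, f k + (f i + f i) by ring, zmod2_add_self, add_zero]
lemma zmod2_solve'' {a b c : ZMod 2} (h : b + (a + c) = 0) : a = b + c := by
  revert a b c; decide

/-- For `n = p_1 ⋯ p_t q` with `t` odd, `p_i ≡ 5 (mod 8)`, `q ≡ 7 (mod 8)`,
`rank A_P = t - 1` and `(p_i / q) = 1`, the Monsky matrix `M` of `n` (with the prime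
factors ordered as `p_1, …, p_t, q`) has rank `2 t` (so the 2-Selmer rank is `2`),
and its null space is spanned by `Ψ(q, 1)` and `Ψ(P, P)`. -/
theorem stmt6 (t : ℕ) (ht : Odd t)
    (p : Fin t → ℕ) (q : ℕ)
    (hp : ∀ i, (p i).Prime) (hq : q.Prime)
    (hinj : Function.Injective p) (hpq : ∀ i, p i ≠ q)
    (hp5 : ∀ i, p i % 8 = 5) (hq7 : q % 8 = 7)
    (hrank : (APmat p).rank = t - 1)
    (hleg : ∀ i, jacobiSym (p i) q = 1) :
    (monsky (Fin.snoc p q)).rank = 2 * t ∧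
    LinearMap.ker (monsky (Fin.snoc p q)).mulVecLin =
      Submodule.span (ZMod 2)
        {psiVec (Fin.snoc p q) q 1,
         psiVec (Fin.snoc p q) (∏ i, p i) (∏ i, p i)} := by
  have ht0 : 0 < t := ht.pos
  set ℓ : Fin (t + 1) → ℕ := Fin.snoc p q with hℓ
  have hℓc : ∀ i : Fin t, ℓ i.castSucc = p i := fun i => by simp [hℓ]
  have hℓl : ℓ (Fin.last t) = q := by simp [hℓ]
  -- number theory facts
  have hq_odd : Odd q := Nat.odd_iff.mpr (by omega)
  have hp4 : ∀ i, p i % 4 = 1 := fun i => by have := hp5 i; omega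
  have hqp : ∀ i, jacobiSym q (p i) = 1 := fun i => by
    rw [← jac_swap (hp4 i) hq_odd]; exact hleg i
  have hpp : ∀ i j : Fin t, jacobiSym (p j) (p i) = jacobiSym (p i) (p j) := fun i j =>
    jac_swap (hp4 j) (Nat.odd_iff.mpr (by have := hp5 i; omega))
  have hppℓ : ∀ i j : Fin t, jacobiSym (p j) (p i) = jacobiSym (p i) (p j) := hpp
  -- entries of APmat ℓ
  have hA_cl : ∀ i : Fin t, APmat ℓ i.castSucc (Fin.last t) = 0 := by
    intro i
    rw [APmat_offdiag ℓ (Fin.castSucc_lt_last i).ne, hℓl, hℓc, if_neg]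
    simp [hqp i]
  have hA_row_last : ∀ j : Fin (t + 1), APmat ℓ (Fin.last t) j = 0 := by
    intro j
    refine Fin.lastCases ?_ ?_ j
    · rw [APmat_diag]
      refine Finset.sum_eq_zero fun k hk => ?_
      obtain ⟨k', rfl⟩ := Fin.exists_castSucc_eq.mpr (Finset.mem_erase.mp hk).1
      rw [hℓc, hℓl, if_neg]
      simp [hleg k']
    · intro j'
      rw [APmat_offdiag ℓ (Fin.castSucc_lt_last j').ne', hℓc, hℓl, if_neg]
      simp [hleg j']
  have hAcc : ∀ i j : Fin t, APmat ℓ i.castSucc j.castSucc = APmat p i j := by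
    intro i j
    rcases eq_or_ne i j with rfl | hij
    · rw [APmat_diag, APmat_diag, erase_sum_char2, erase_sum_char2, Fin.sum_univ_castSucc]
      simp only [hℓc, hℓl]
      rw [if_neg (by simp [hqp i]), add_zero]
    · rw [APmat_offdiag ℓ (fun h => hij (Fin.castSucc_injective t h)),
        APmat_offdiag p hij, hℓc, hℓc]
  -- mulVec helpers
  have hAv_cast : ∀ (v : Fin (t + 1) → ZMod 2) (i : Fin t),
      (APmat ℓ *ᵥ v) i.castSucc = (APmat p *ᵥ (v ∘ Fin.castSucc)) i := by
    intro v i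
    simp only [Matrix.mulVec, dotProduct]
    rw [Fin.sum_univ_castSucc, hA_cl i, zero_mul, add_zero]
    exact Finset.sum_congr rfl fun j _ => by rw [hAcc i j]; rfl
  have hAv_last : ∀ v : Fin (t + 1) → ZMod 2, (APmat ℓ *ᵥ v) (Fin.last t) = 0 := by
    intro v
    simp only [Matrix.mulVec, dotProduct]
    exact Finset.sum_eq_zero fun j _ => by rw [hA_row_last j, zero_mul]
  have hD2_cast : ∀ (v : Fin (t + 1) → ZMod 2) (i : Fin t),
      (monskyD 2 ℓ *ᵥ v) i.castSucc = v i.castSucc := by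
    intro v i
    rw [monskyD, Matrix.mulVec_diagonal, hℓc, if_pos (jac_two_of_five (hp5 i)), one_mul]
  have hD2_last : ∀ v : Fin (t + 1) → ZMod 2, (monskyD 2 ℓ *ᵥ v) (Fin.last t) = 0 := by
    intro v
    rw [monskyD, Matrix.mulVec_diagonal, hℓl, if_neg (by simp [jac_two_of_seven hq7]), zero_mul]
  have hDm2_cast : ∀ (v : Fin (t + 1) → ZMod 2) (i : Fin t),
      (monskyD (-2) ℓ *ᵥ v) i.castSucc = v i.castSucc := by
    intro v i
    rw [monskyD, Matrix.mulVec_diagonal, hℓc, if_pos (jac_neg_two_of_five (hp5 i)), one_mul]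
  have hDm2_last : ∀ v : Fin (t + 1) → ZMod 2,
      (monskyD (-2) ℓ *ᵥ v) (Fin.last t) = v (Fin.last t) := by
    intro v
    rw [monskyD, Matrix.mulVec_diagonal, hℓl, if_pos (jac_neg_two_of_seven hq7), one_mul]
  have hblocks : ∀ x y : Fin (t + 1) → ZMod 2,
      monsky ℓ *ᵥ Sum.elim x y = Sum.elim
        (APmat ℓ *ᵥ x + monskyD 2 ℓ *ᵥ x + monskyD 2 ℓ *ᵥ y)
        (monskyD 2 ℓ *ᵥ x + (APmat ℓ *ᵥ y + monskyD (-2) ℓ *ᵥ y)) := by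
    intro x y
    rw [monsky, Matrix.fromBlocks_mulVec, Sum.elim_comp_inl, Sum.elim_comp_inr,
      Matrix.add_mulVec, Matrix.add_mulVec]
  -- prime facts
  have hℓp : ∀ j : Fin (t + 1), (ℓ j).Prime := fun j =>
    Fin.lastCases (by rw [hℓl]; exact hq) (fun i => by rw [hℓc]; exact hp i) j
  have hqP : ¬ q ∣ ∏ i, p i := by
    intro hdvd
    obtain ⟨i, _, hdvd'⟩ := (Nat.Prime.prime hq).exists_mem_finset_dvd hdvd
    exact hpq i ((Nat.prime_dvd_prime_iff_eq hq (hp i)).mp hdvd').symm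
  -- component values of the two vectors
  have hv1c : ∀ i : Fin t, psiVec ℓ q 1 (Sum.inl i.castSucc) = 0 := by
    intro i
    simp only [psiVec, Sum.elim_inl, expVec, hℓc]
    rw [if_neg]
    exact fun hdvd => hpq i ((Nat.prime_dvd_prime_iff_eq (hp i) hq).mp hdvd)
  have hv1l : psiVec ℓ q 1 (Sum.inl (Fin.last t)) = 1 := by
    simp [psiVec, expVec, hℓl]
  have hv1r : ∀ j : Fin (t + 1), psiVec ℓ q 1 (Sum.inr j) = 0 := by
    intro j
    simp only [psiVec, Sum.elim_inr, expVec]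
    rw [if_neg (Nat.Prime.not_dvd_one (hℓp j))]
  have hv2lc : ∀ i : Fin t, psiVec ℓ (∏ i, p i) (∏ i, p i) (Sum.inl i.castSucc) = 1 := by
    intro i
    simp only [psiVec, Sum.elim_inl, expVec, hℓc]
    rw [if_pos (Finset.dvd_prod_of_mem p (Finset.mem_univ i))]
  have hv2rc : ∀ i : Fin t, psiVec ℓ (∏ i, p i) (∏ i, p i) (Sum.inr i.castSucc) = 1 := by
    intro i
    simp only [psiVec, Sum.elim_inr, expVec, hℓc]
    rw [if_pos (Finset.dvd_prod_of_mem p (Finset.mem_univ i))]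
  have hv2ll : psiVec ℓ (∏ i, p i) (∏ i, p i) (Sum.inl (Fin.last t)) = 0 := by
    simp only [psiVec, Sum.elim_inl, expVec, hℓl]
    rw [if_neg hqP]
  have hv2rl : psiVec ℓ (∏ i, p i) (∏ i, p i) (Sum.inr (Fin.last t)) = 0 := by
    simp only [psiVec, Sum.elim_inr, expVec, hℓl]
    rw [if_neg hqP]
  -- the two vectors are in the kernel
  have hv1ker : monsky ℓ *ᵥ psiVec ℓ q 1 = 0 := by
    rw [← Sum.elim_comp_inl_inr (psiVec ℓ q 1), hblocks]
    have hxc : (psiVec ℓ q 1 ∘ Sum.inl) ∘ Fin.castSucc = (0 : Fin t → ZMod 2) :=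
      funext fun i => hv1c i
    have hy : psiVec ℓ q 1 ∘ Sum.inr = (0 : Fin (t + 1) → ZMod 2) := funext fun j => hv1r j
    funext k
    rcases k with i | i
    · refine Fin.lastCases ?_ (fun i => ?_) i
      · simp only [Sum.elim_inl, Pi.add_apply, Pi.zero_apply]
        rw [hAv_last, hD2_last, hD2_last]
        ring
      · simp only [Sum.elim_inl, Pi.add_apply, Pi.zero_apply]
        rw [hAv_cast, hxc, Matrix.mulVec_zero, hD2_cast, hD2_cast]
        show 0 + psiVec ℓ q 1 (Sum.inl i.castSucc) + psiVec ℓ q 1 (Sum.inr i.castSucc) = 0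
        rw [hv1c i, hv1r]
        ring
    · refine Fin.lastCases ?_ (fun i => ?_) i
      · simp only [Sum.elim_inr, Pi.add_apply, Pi.zero_apply]
        rw [hD2_last, hAv_last, hDm2_last]
        show 0 + (0 + psiVec ℓ q 1 (Sum.inr (Fin.last t))) = 0
        rw [hv1r]
        ring
      · simp only [Sum.elim_inr, Pi.add_apply, Pi.zero_apply]
        rw [hD2_cast, hAv_cast, hDm2_cast]
        show psiVec ℓ q 1 (Sum.inl i.castSucc)
            + ((APmat p *ᵥ ((psiVec ℓ q 1 ∘ Sum.inr) ∘ Fin.castSucc)) i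
              + psiVec ℓ q 1 (Sum.inr i.castSucc)) = 0
        have : (psiVec ℓ q 1 ∘ Sum.inr) ∘ Fin.castSucc = (0 : Fin t → ZMod 2) :=
          funext fun j => hv1r _
        rw [this, Matrix.mulVec_zero, hv1c i, hv1r]
        simp
  have hv2ker : monsky ℓ *ᵥ psiVec ℓ (∏ i, p i) (∏ i, p i) = 0 := by
    rw [← Sum.elim_comp_inl_inr (psiVec ℓ (∏ i, p i) (∏ i, p i)), hblocks]
    have hxc : (psiVec ℓ (∏ i, p i) (∏ i, p i) ∘ Sum.inl) ∘ Fin.castSucc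
        = (fun _ => (1 : ZMod 2)) := funext fun i => hv2lc i
    have hyc : (psiVec ℓ (∏ i, p i) (∏ i, p i) ∘ Sum.inr) ∘ Fin.castSucc
        = (fun _ => (1 : ZMod 2)) := funext fun i => hv2rc i
    funext k
    rcases k with i | i
    · refine Fin.lastCases ?_ (fun i => ?_) i
      · simp only [Sum.elim_inl, Pi.add_apply, Pi.zero_apply]
        rw [hAv_last, hD2_last, hD2_last]
        ring
      · simp only [Sum.elim_inl, Pi.add_apply, Pi.zero_apply]
        rw [hAv_cast, hxc, APmat_mulVec_one, hD2_cast, hD2_cast]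
        show (0 : ZMod 2) + psiVec ℓ (∏ i, p i) (∏ i, p i) (Sum.inl i.castSucc)
            + psiVec ℓ (∏ i, p i) (∏ i, p i) (Sum.inr i.castSucc) = 0
        rw [hv2lc i, hv2rc i]
        decide
    · refine Fin.lastCases ?_ (fun i => ?_) i
      · simp only [Sum.elim_inr, Pi.add_apply, Pi.zero_apply]
        rw [hD2_last, hAv_last, hDm2_last]
        show (0 : ZMod 2) + (0 + psiVec ℓ (∏ i, p i) (∏ i, p i) (Sum.inr (Fin.last t))) = 0
        rw [hv2rl]
        ring
      · simp only [Sum.elim_inr, Pi.add_apply, Pi.zero_apply]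
        rw [hD2_cast, hAv_cast, hyc, APmat_mulVec_one, hDm2_cast]
        show psiVec ℓ (∏ i, p i) (∏ i, p i) (Sum.inl i.castSucc)
            + ((0 : ZMod 2) + psiVec ℓ (∏ i, p i) (∏ i, p i) (Sum.inr i.castSucc)) = 0
        rw [hv2lc i, hv2rc i]
        decide
  -- span ≤ ker
  have hspan_le : Submodule.span (ZMod 2)
      {psiVec ℓ q 1, psiVec ℓ (∏ i, p i) (∏ i, p i)}
      ≤ LinearMap.ker (monsky ℓ).mulVecLin := by
    rw [Submodule.span_le]
    intro z hz
    rcases Set.mem_insert_iff.mp hz with rfl | hz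
    · rw [SetLike.mem_coe, LinearMap.mem_ker, Matrix.mulVecLin_apply]
      exact hv1ker
    · rcases Set.mem_singleton_iff.mp hz with rfl
      rw [SetLike.mem_coe, LinearMap.mem_ker, Matrix.mulVecLin_apply]
      exact hv2ker
  -- ker ≤ span
  have hkerspan := ker_APmat_eq_span ht0 (APmat p) hrank (APmat_mulVec_one p)
  have hnotrange := one_notin_range ht (APmat p) (APmat_colsum hpp)
  have hker_le : LinearMap.ker (monsky ℓ).mulVecLin ≤ Submodule.span (ZMod 2)
      {psiVec ℓ q 1, psiVec ℓ (∏ i, p i) (∏ i, p i)} := by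
    intro v hv
    have hv0 : monsky ℓ *ᵥ v = 0 := by
      rwa [LinearMap.mem_ker, Matrix.mulVecLin_apply] at hv
    have hsplit : monsky ℓ *ᵥ Sum.elim (v ∘ Sum.inl) (v ∘ Sum.inr) = 0 := by
      rwa [Sum.elim_comp_inl_inr]
    rw [hblocks] at hsplit
    have e1 : ∀ i : Fin t, (APmat p *ᵥ ((v ∘ Sum.inl) ∘ Fin.castSucc)) i
        = v (Sum.inl i.castSucc) + v (Sum.inr i.castSucc) := by
      intro i
      have h := congrFun hsplit (Sum.inl i.castSucc)
      simp only [Sum.elim_inl, Pi.add_apply, Pi.zero_apply] at h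
      rw [hAv_cast, hD2_cast, hD2_cast] at h
      exact zmod2_solve' h
    have e2 : ∀ i : Fin t, (APmat p *ᵥ ((v ∘ Sum.inr) ∘ Fin.castSucc)) i
        = v (Sum.inl i.castSucc) + v (Sum.inr i.castSucc) := by
      intro i
      have h := congrFun hsplit (Sum.inr i.castSucc)
      simp only [Sum.elim_inr, Pi.add_apply, Pi.zero_apply] at h
      rw [hD2_cast, hAv_cast, hDm2_cast] at h
      have h2 : v (Sum.inl i.castSucc) + ((APmat p *ᵥ ((v ∘ Sum.inr) ∘ Fin.castSucc)) i
          + v (Sum.inr i.castSucc)) = 0 := h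
      exact zmod2_solve'' h2
    have elast : v (Sum.inr (Fin.last t)) = 0 := by
      have h := congrFun hsplit (Sum.inr (Fin.last t))
      simp only [Sum.elim_inr, Pi.add_apply, Pi.zero_apply] at h
      rw [hD2_last, hAv_last, hDm2_last] at h
      simpa using h
    have hmem : ((v ∘ Sum.inl) ∘ Fin.castSucc) + ((v ∘ Sum.inr) ∘ Fin.castSucc)
        ∈ LinearMap.ker (APmat p).mulVecLin := by
      rw [LinearMap.mem_ker, Matrix.mulVecLin_apply, Matrix.mulVec_add]
      funext i
      simp only [Pi.add_apply, Pi.zero_apply]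
      rw [e1 i, e2 i]
      exact zmod2_add_self _
    rw [hkerspan, Submodule.mem_span_singleton] at hmem
    obtain ⟨c, hc⟩ := hmem
    rcases zmod2_cases c with rfl | rfl
    · -- c = 0 : x' = y'
      have hxy : ∀ i : Fin t, v (Sum.inr i.castSucc) = v (Sum.inl i.castSucc) := by
        intro i
        have := congrFun hc i
        simp only [zero_smul, Pi.zero_apply, Pi.add_apply] at this
        exact (zmod2_add_eq_zero.mp this.symm).symm
      have hxker : ((v ∘ Sum.inl) ∘ Fin.castSucc) ∈ LinearMap.ker (APmat p).mulVecLin := by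
        rw [LinearMap.mem_ker, Matrix.mulVecLin_apply]
        funext i
        simp only [Pi.zero_apply]
        rw [e1 i, hxy i]
        exact zmod2_add_self _
      rw [hkerspan, Submodule.mem_span_singleton] at hxker
      obtain ⟨d, hd⟩ := hxker
      have hdval : ∀ i : Fin t, v (Sum.inl i.castSucc) = d := fun i => by
        have := congrFun hd i
        simpa [smul_eq_mul] using this.symm
      refine Submodule.mem_span_pair.mpr ⟨v (Sum.inl (Fin.last t)), d, ?_⟩
      funext k
      rcases k with i | i
      · refine Fin.lastCases ?_ (fun i => ?_) i
        · simp only [Pi.add_apply, Pi.smul_apply, smul_eq_mul]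
          rw [hv1l, hv2ll, mul_one, mul_zero, add_zero]
        · simp only [Pi.add_apply, Pi.smul_apply, smul_eq_mul]
          rw [hv1c i, hv2lc i, mul_zero, mul_one, zero_add, hdval i]
      · refine Fin.lastCases ?_ (fun i => ?_) i
        · simp only [Pi.add_apply, Pi.smul_apply, smul_eq_mul]
          rw [hv1r, hv2rl, mul_zero, mul_zero, add_zero, elast]
        · simp only [Pi.add_apply, Pi.smul_apply, smul_eq_mul]
          rw [hv1r, hv2rc i, mul_zero, mul_one, zero_add, hxy i, hdval i]
    · -- c = 1 : contradiction with one_notin_range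
      exfalso
      apply hnotrange
      refine ⟨(v ∘ Sum.inl) ∘ Fin.castSucc, ?_⟩
      rw [Matrix.mulVecLin_apply]
      funext i
      rw [e1 i]
      have hc' := congrFun hc i
      simp only [one_smul, Pi.add_apply] at hc'
      exact hc'.symm
  have hkereq : LinearMap.ker (monsky ℓ).mulVecLin = Submodule.span (ZMod 2)
      {psiVec ℓ q 1, psiVec ℓ (∏ i, p i) (∏ i, p i)} :=
    le_antisymm hker_le hspan_le
  refine ⟨?_, hkereq⟩
  -- rank computation
  have hli : LinearIndependent (ZMod 2)
      ![psiVec ℓ q 1, psiVec ℓ (∏ i, p i) (∏ i, p i)] := by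
    rw [linearIndependent_fin2]
    constructor
    · intro h0
      have := congrFun h0 (Sum.inl ((⟨0, ht0⟩ : Fin t)).castSucc)
      rw [show (![psiVec ℓ q 1, psiVec ℓ (∏ i, p i) (∏ i, p i)] : Fin 2 → _) 1
          = psiVec ℓ (∏ i, p i) (∏ i, p i) from rfl, hv2lc] at this
      simpa using this
    · intro a h
      have := congrFun h (Sum.inl (Fin.last t))
      rw [show (![psiVec ℓ q 1, psiVec ℓ (∏ i, p i) (∏ i, p i)] : Fin 2 → _) 1
          = psiVec ℓ (∏ i, p i) (∏ i, p i) from rfl,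
        show (![psiVec ℓ q 1, psiVec ℓ (∏ i, p i) (∏ i, p i)] : Fin 2 → _) 0
          = psiVec ℓ q 1 from rfl] at this
      rw [Pi.smul_apply, smul_eq_mul, hv2ll, mul_zero, hv1l] at this
      exact zero_ne_one this
  have hrange2 : Set.range ![psiVec ℓ q 1, psiVec ℓ (∏ i, p i) (∏ i, p i)]
      = {psiVec ℓ q 1, psiVec ℓ (∏ i, p i) (∏ i, p i)} := by
    ext z
    simp only [Set.mem_range, Fin.exists_fin_two, Matrix.cons_val_zero, Matrix.cons_val_one,
      Matrix.head_cons, Set.mem_insert_iff, Set.mem_singleton_iff, eq_comm]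
  have hcard : Module.finrank (ZMod 2) (Submodule.span (ZMod 2)
      ({psiVec ℓ q 1, psiVec ℓ (∏ i, p i) (∏ i, p i)} :
        Set ((Fin (t + 1) ⊕ Fin (t + 1)) → ZMod 2))) = 2 := by
    rw [← hrange2, finrank_span_eq_card hli, Fintype.card_fin]
  have hrn := LinearMap.finrank_range_add_finrank_ker (monsky ℓ).mulVecLin
  rw [Module.finrank_fintype_fun_eq_card, Fintype.card_sum, Fintype.card_fin] at hrn
  rw [hkereq, hcard] at hrn
  have hrdef : (monsky ℓ).rank
      = Module.finrank (ZMod 2) (LinearMap.range (monsky ℓ).mulVecLin) := rfl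
  omega
end

section
/- Let t be an odd positive integer and let p_1, …, p_t, q be distinct primes with p_i ≡ 5 (mod 8) for all i and q ≡ 7 (mod 8), and suppose the Legendre symbol (q/p_i) = 1 for all i; set P = p_1⋯p_t. If there exist nonzero integers x, y, z, w with gcd(x, y) = 1 satisfying Px² + qy² = z² and Px² − qy² = w², then the quartic residue symbol (q/P)_4 = −1, i.e., the number of indices i ∈ {1,…,t} with q^{(p_i−1)/4} ≡ −1 (mod p_i) is odd. -/
open Finset

open ZMod

-- ### generic helpers

lemma my_gcd_builder (a b : ℤ)
    (H : ∀ r : ℕ, r.Prime → (r : ℤ) ∣ a → (r : ℤ) ∣ b → False) : Int.gcd a b = 1 := by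
  by_contra hne
  rcases Nat.exists_prime_and_dvd hne with ⟨r, hr, hrd⟩
  exact H r hr ((Int.natCast_dvd_natCast.mpr hrd).trans (Int.gcd_dvd_left _ _))
    ((Int.natCast_dvd_natCast.mpr hrd).trans (Int.gcd_dvd_right _ _))

lemma my_not_dvd_of_gcd_one {a b : ℤ} {r : ℕ} (h : Int.gcd a b = 1) (hr : r.Prime)
    (ha : (r : ℤ) ∣ a) (hb : (r : ℤ) ∣ b) : False := by
  have : (r : ℤ) ∣ (Int.gcd a b : ℤ) := Int.dvd_coe_gcd ha hb
  rw [h] at this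
  exact hr.ne_one (Nat.dvd_one.mp (by exact_mod_cast this))

lemma my_jacobi_prod_right {ι : Type*} (a : ℤ) (s : Finset ι) (f : ι → ℕ)
    (hf : ∀ i ∈ s, f i ≠ 0) :
    jacobiSym a (∏ i ∈ s, f i) = ∏ i ∈ s, jacobiSym a (f i) := by
  induction s using Finset.cons_induction with
  | empty => simp
  | cons i s hi ih =>
    rw [Finset.prod_cons, Finset.prod_cons,
      jacobiSym.mul_right' a (hf i (Finset.mem_cons_self i s))
        (Finset.prod_ne_zero_iff.mpr fun j hj => hf j (Finset.mem_cons_of_mem hj)),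
      ih fun j hj => hf j (Finset.mem_cons_of_mem hj)]

lemma my_odd_card_filter {ι : Type*} (s : Finset ι) (f : ι → ℤ)
    (hf : ∀ i ∈ s, f i = 1 ∨ f i = -1) (h : ∏ i ∈ s, f i = -1) :
    Odd (s.filter fun i => f i = -1).card := by
  have key : ∀ s : Finset ι, (∀ i ∈ s, f i = 1 ∨ f i = -1) →
      ∏ i ∈ s, f i = (-1) ^ (s.filter fun i => f i = -1).card := by
    intro s hs
    induction s using Finset.cons_induction with
    | empty => simp
    | cons i s hi ih =>
      rw [Finset.prod_cons, Finset.filter_cons,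
        ih fun j hj => hs j (Finset.mem_cons_of_mem hj)]
      rcases hs i (Finset.mem_cons_self i s) with h1 | h1
      · simp [h1]
      · simp [h1, pow_succ, mul_comm]
  rw [key s hf] at h
  rcases Nat.even_or_odd (s.filter fun i => f i = -1).card with he | ho
  · rw [he.neg_one_pow] at h; norm_num at h
  · exact ho

-- ### the key quartic-to-quadratic step (per prime)

lemma my_per_prime {r : ℕ} (hr : r.Prime) (hr8 : r % 8 = 5) {a : ℕ} {yy zz : ℤ}
    (h : (a : ZMod r) * (yy : ZMod r) ^ 2 = (zz : ZMod r) ^ 2)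
    (hy : (yy : ZMod r) ≠ 0) (hz : (zz : ZMod r) ≠ 0) :
    (a : ZMod r) ^ ((r - 1) / 4) = ((jacobiSym (zz * yy) r : ℤ) : ZMod r) := by
  haveI : Fact r.Prime := ⟨hr⟩
  have h2e : 2 * ((r - 1) / 4) = r / 2 := by omega
  have hpow : (a : ZMod r) ^ ((r - 1) / 4) * (yy : ZMod r) ^ (r / 2)
      = (zz : ZMod r) ^ (r / 2) := by
    have := congrArg (· ^ ((r - 1) / 4)) h
    simp only [mul_pow, ← pow_mul] at this
    rwa [mul_comm 2, ← mul_comm 2 ((r-1)/4), h2e] at this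
  have hly := legendreSym.eq_pow r yy
  have hlz := legendreSym.eq_pow r zz
  rw [← hly, ← hlz] at hpow
  have hly1 : legendreSym r yy = 1 ∨ legendreSym r yy = -1 := legendreSym.eq_one_or_neg_one r hy
  have hsq : ((legendreSym r yy : ℤ) : ZMod r) * ((legendreSym r yy : ℤ) : ZMod r) = 1 := by
    rcases hly1 with h1 | h1 <;> rw [h1] <;> norm_num
  have : (a : ZMod r) ^ ((r - 1) / 4)
      = ((legendreSym r zz : ℤ) : ZMod r) * ((legendreSym r yy : ℤ) : ZMod r) := by
    calc (a : ZMod r) ^ ((r - 1) / 4)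
        = (a : ZMod r) ^ ((r - 1) / 4) * (((legendreSym r yy : ℤ) : ZMod r)
          * ((legendreSym r yy : ℤ) : ZMod r)) := by rw [hsq, mul_one]
      _ = ((legendreSym r zz : ℤ) : ZMod r) * ((legendreSym r yy : ℤ) : ZMod r) := by
          rw [← mul_assoc, hpow]
  rw [this, ← Int.cast_mul, ← legendreSym.mul, jacobiSym.legendreSym.to_jacobiSym]

-- ### the J(u+v | q) = 1 lemma

lemma my_gcd_prime_not_dvd {q : ℕ} (hq : q.Prime) {a : ℤ} (h : ¬ (q : ℤ) ∣ a) :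
    Int.gcd a q = 1 := by
  have : Nat.Coprime q a.natAbs :=
    (Nat.Prime.coprime_iff_not_dvd hq).mpr
      (fun hd => h (Int.dvd_natAbs.mp (Int.natCast_dvd_natCast.mpr hd)))
  simpa [Int.gcd] using this.symm

lemma my_L6' {q : ℕ} (hq : q.Prime) (hq8 : q % 8 = 7) {u v m : ℤ}
    (hu : 0 < u) (hv : 0 < v) (hg : Int.gcd u v = 1) (huv : u * v = 2 * q * m ^ 2)
    (hqv : (q : ℤ) ∣ v) : jacobiSym (u + v) q = 1 := by
  have hq2 : q % 2 = 1 := by omega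
  have hqz : Prime (q : ℤ) := Nat.prime_iff_prime_int.mp hq
  have hq0 : (2 * (q : ℤ)) ≠ 0 := by
    have := hq.pos; positivity
  have hqu : ¬ (q : ℤ) ∣ u := fun hqu => my_not_dvd_of_gcd_one hg hq hqu hqv
  have hcop : IsCoprime u v := Int.isCoprime_iff_gcd_eq_one.mpr hg
  obtain ⟨k, hk⟩ := hqv
  have hmod : jacobiSym (u + v) q = jacobiSym u q := by
    apply jacobiSym.mod_left'
    rw [hk]
    exact Int.add_mul_emod_self_left ..
  rw [hmod]
  rcases Int.even_or_odd u with h2u | h2u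
  · -- u even : u = 2 u₁, v = q v₁, u₁ * v₁ = m², u = 2 * square
    obtain ⟨u₁, hu₁⟩ := h2u
    have hu₁' : u = 2 * u₁ := by omega
    have hcan : u₁ * k = m ^ 2 := by
      apply mul_left_cancel₀ hq0
      rw [hu₁', hk] at huv
      linear_combination huv
    have hgc : Int.gcd u₁ k = 1 := by
      apply Int.isCoprime_iff_gcd_eq_one.mp
      exact (hcop.of_isCoprime_of_dvd_left ⟨2, by rw [hu₁']; ring⟩).of_isCoprime_of_dvd_right
        ⟨(q : ℤ), by rw [hk]; ring⟩
    obtain ⟨a, ha⟩ := Int.sq_of_gcd_eq_one hgc hcan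
    have ha' : u₁ = a ^ 2 := by
      rcases ha with h | h
      · exact h
      · exfalso; nlinarith
    have hqa : ¬ (q : ℤ) ∣ a := fun hd => hqu (by rw [hu₁', ha']; exact Dvd.dvd.mul_left (hd.pow (by norm_num)) 2)
    rw [hu₁', ha', jacobiSym.mul_left, jacobiSym.sq_one' (my_gcd_prime_not_dvd hq hqa),
      mul_one, jacobiSym.at_two (Nat.odd_iff.mpr hq2), ZMod.χ₈_nat_eq_if_mod_eight]
    simp [hq2, hq8]
  · -- u odd : 2 ∣ v, so 2q ∣ v, v = 2 q v₁, u * v₁ = m², u = square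
    have h2v : (2 : ℤ) ∣ v := by
      have h2uv : (2 : ℤ) ∣ u * v := ⟨(q : ℤ) * m ^ 2, by linarith [huv]⟩
      rcases (Int.prime_two.dvd_mul.mp h2uv) with h | h
      · exact absurd (even_iff_two_dvd.mpr h) (Int.not_even_iff_odd.mpr h2u)
      · exact h
    have hcop2q : IsCoprime (2 : ℤ) (q : ℤ) := by
      apply Int.isCoprime_iff_gcd_eq_one.mpr
      have : Nat.Coprime 2 q := (Nat.prime_two.coprime_iff_not_dvd).mpr (by omega)
      simpa [Int.gcd] using this
    have h2qv : (2 * (q : ℤ)) ∣ v := hcop2q.mul_dvd h2v ⟨k, hk⟩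
    obtain ⟨v₁, hv₁⟩ := h2qv
    have hcan : u * v₁ = m ^ 2 := by
      apply mul_left_cancel₀ hq0
      calc 2 * (q:ℤ) * (u * v₁) = u * (2 * q * v₁) := by ring
        _ = u * v := by rw [← hv₁]
        _ = 2 * q * m ^ 2 := huv
    have hgc : Int.gcd u v₁ = 1 := by
      apply Int.isCoprime_iff_gcd_eq_one.mp
      exact hcop.of_isCoprime_of_dvd_right ⟨2 * (q : ℤ), by rw [hv₁]; ring⟩
    obtain ⟨a, ha⟩ := Int.sq_of_gcd_eq_one hgc hcan
    have ha' : u = a ^ 2 := by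
      rcases ha with h | h
      · exact h
      · exfalso; nlinarith
    have hqa : ¬ (q : ℤ) ∣ a := fun hd => hqu (by rw [ha']; exact hd.pow (by norm_num))
    rw [ha']
    exact jacobiSym.sq_one' (my_gcd_prime_not_dvd hq hqa)

lemma my_L6 {q : ℕ} (hq : q.Prime) (hq8 : q % 8 = 7) {u v m : ℤ}
    (hu : 0 < u) (hv : 0 < v) (hg : Int.gcd u v = 1) (huv : u * v = 2 * q * m ^ 2) :
    jacobiSym (u + v) q = 1 := by
  have hqz : Prime (q : ℤ) := Nat.prime_iff_prime_int.mp hq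
  have hdvd : (q : ℤ) ∣ u * v := by rw [huv]; exact ⟨2 * m ^ 2, by ring⟩
  rcases hqz.dvd_mul.mp hdvd with hcase | hcase
  · rw [add_comm]
    exact my_L6' hq hq8 hv hu (by rwa [Int.gcd_comm]) (by rw [← huv]; ring) hcase
  · exact my_L6' hq hq8 hu hv hg huv hcase

-- ### main auxiliary theorem, with positivity

theorem my_aux (t : ℕ) (ht : Odd t)
    (p : Fin t → ℕ) (q : ℕ)
    (hp : ∀ i, (p i).Prime) (hq : q.Prime)
    (hinj : Function.Injective p) (hpq : ∀ i, p i ≠ q)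
    (hp5 : ∀ i, p i % 8 = 5) (hq7 : q % 8 = 7)
    (x y z w : ℤ) (hx : 0 < x) (hy : 0 < y) (hz : 0 < z) (hw : 0 < w)
    (hgcd : Int.gcd x y = 1)
    (heq1 : (∏ i, (p i : ℤ)) * x ^ 2 + (q : ℤ) * y ^ 2 = z ^ 2)
    (heq2 : (∏ i, (p i : ℤ)) * x ^ 2 - (q : ℤ) * y ^ 2 = w ^ 2) :
    Odd (univ.filter fun i => (q : ZMod (p i)) ^ ((p i - 1) / 4) = -1).card := by
  classical
  set Pn : ℕ := ∏ i, p i with hPnd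
  have hPz : (∏ i, (p i : ℤ)) = ((Pn : ℕ) : ℤ) := (Nat.cast_prod _ _).symm
  rw [hPz] at heq1 heq2
  have hq2 : q % 2 = 1 := by omega
  have hqodd : Odd q := Nat.odd_iff.mpr hq2
  have hq0 : 0 < q := hq.pos
  have hqzP : Prime (q : ℤ) := Nat.prime_iff_prime_int.mp hq
  have hPpos : 0 < Pn := Finset.prod_pos fun i _ => (hp i).pos
  -- P mod 8 = 5
  have hP8z : ((Pn : ℕ) : ZMod 8) = 5 := by
    obtain ⟨k, hk⟩ := ht
    have h1 : ((Pn : ℕ) : ZMod 8) = ∏ i, ((p i : ℕ) : ZMod 8) := by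
      rw [hPnd]; push_cast; rfl
    have hpi : ∀ i : Fin t, ((p i : ℕ) : ZMod 8) = 5 := by
      intro i
      calc ((p i : ℕ) : ZMod 8) = ((p i % 8 : ℕ) : ZMod 8) := (ZMod.natCast_mod _ _).symm
        _ = ((5 : ℕ) : ZMod 8) := by rw [hp5 i]
        _ = 5 := by norm_num
    rw [h1, Finset.prod_congr rfl fun i _ => hpi i, Finset.prod_const, Finset.card_univ,
      Fintype.card_fin, hk, pow_add, pow_mul, show ((5:ZMod 8))^2 = 1 by decide, one_pow,
      pow_one, one_mul]
  have hP8 : Pn % 8 = 5 := by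
    have h5 : ((5 : ℕ) : ZMod 8) = 5 := by norm_num
    have := (ZMod.natCast_eq_natCast_iff' Pn 5 8).mp (by rw [hP8z, ← h5])
    omega
  have hP4 : Pn % 4 = 1 := by omega
  have hPodd : Odd Pn := by rw [Nat.odd_iff]; omega
  -- prime divisors of P
  have hdvdP : ∀ r : ℕ, r.Prime → r ∣ Pn → ∃ i, r = p i := by
    intro r hr hd
    obtain ⟨i, -, hi⟩ := hr.prime.exists_mem_finset_dvd hd
    exact ⟨i, (Nat.prime_dvd_prime_iff_eq hr (hp i)).mp hi⟩
  have hqP : ¬ q ∣ Pn := fun hd => by obtain ⟨i, hi⟩ := hdvdP q hq hd; exact hpq i hi.symm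
  have hqPz : ¬ (q : ℤ) ∣ ((Pn : ℕ) : ℤ) := fun hd => hqP (Int.natCast_dvd_natCast.mp hd)
  -- q does not divide x
  have hqx : ¬ (q : ℤ) ∣ x := by
    intro hd
    have hqz2 : (q : ℤ) ∣ z ^ 2 := by
      rw [← heq1]
      exact dvd_add (Dvd.dvd.mul_left (hd.pow two_ne_zero) _) ⟨y ^ 2, rfl⟩
    have hqz' : (q : ℤ) ∣ z := hqzP.dvd_of_dvd_pow hqz2
    have h3 : (q : ℤ) ^ 2 ∣ (q : ℤ) * y ^ 2 := by
      have e : (q : ℤ) * y ^ 2 = z ^ 2 - (Pn : ℕ) * x ^ 2 := by linarith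
      rw [e]
      exact dvd_sub (pow_dvd_pow_of_dvd hqz' 2) (Dvd.dvd.mul_left (pow_dvd_pow_of_dvd hd 2) _)
    have h4 : (q : ℤ) ∣ y ^ 2 := by
      rcases h3 with ⟨c, hc⟩
      exact ⟨c, by apply mul_left_cancel₀ (show (q:ℤ) ≠ 0 by positivity); linear_combination hc⟩
    exact my_not_dvd_of_gcd_one hgcd hq hd (hqzP.dvd_of_dvd_pow h4)
  -- p i does not divide y, nor z
  have hpy : ∀ i, ¬ ((p i : ℤ)) ∣ y := by
    intro i hd
    have hpP : ((p i : ℤ)) ∣ ((Pn : ℕ) : ℤ) :=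
      Int.natCast_dvd_natCast.mpr (Finset.dvd_prod_of_mem p (mem_univ i))
    have hprime : Prime ((p i : ℤ)) := Nat.prime_iff_prime_int.mp (hp i)
    have hdz : (p i : ℤ) ∣ z := by
      apply hprime.dvd_of_dvd_pow (n := 2)
      rw [← heq1]
      exact dvd_add (hpP.mul_right _) ((hd.pow two_ne_zero).mul_left _)
    have h1 : (p i : ℤ) ^ 2 ∣ ((Pn : ℕ) : ℤ) * x ^ 2 := by
      have e : ((Pn : ℕ) : ℤ) * x ^ 2 = z ^ 2 - (q : ℤ) * y ^ 2 := by linarith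
      rw [e]
      exact dvd_sub (pow_dvd_pow_of_dvd hdz 2) ((pow_dvd_pow_of_dvd hd 2).mul_left _)
    have hR : ((Pn : ℕ) : ℤ) = (p i : ℤ) * (∏ j ∈ univ.erase i, (p j : ℤ)) := by
      rw [hPnd]; push_cast
      rw [← Finset.mul_prod_erase univ _ (mem_univ i)]
    have h2 : (p i : ℤ) ∣ (∏ j ∈ univ.erase i, (p j : ℤ)) * x ^ 2 := by
      rcases h1 with ⟨c, hc⟩
      refine ⟨c, ?_⟩
      apply mul_left_cancel₀ (show (p i : ℤ) ≠ 0 by exact_mod_cast (hp i).pos.ne')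
      rw [hR] at hc
      linear_combination hc
    rcases hprime.dvd_mul.mp h2 with h3 | h3
    · obtain ⟨j, hj, hj2⟩ := hprime.exists_mem_finset_dvd h3
      have : p i = p j := (Nat.prime_dvd_prime_iff_eq (hp i) (hp j)).mp
        (Int.natCast_dvd_natCast.mp hj2)
      exact (Finset.ne_of_mem_erase hj) (hinj this).symm
    · exact my_not_dvd_of_gcd_one hgcd (hp i) (hprime.dvd_of_dvd_pow h3) hd
  have hpz : ∀ i, ¬ ((p i : ℤ)) ∣ z := by
    intro i hd
    have hprime : Prime ((p i : ℤ)) := Nat.prime_iff_prime_int.mp (hp i)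
    have h1 : (p i : ℤ) ∣ (q : ℤ) * y ^ 2 := by
      have e : (q : ℤ) * y ^ 2 = z ^ 2 - ((Pn : ℕ) : ℤ) * x ^ 2 := by linarith
      rw [e]
      exact dvd_sub (dvd_pow hd two_ne_zero) (by
        exact Dvd.dvd.mul_right (Int.natCast_dvd_natCast.mpr
          (Finset.dvd_prod_of_mem p (mem_univ i))) _)
    rcases hprime.dvd_mul.mp h1 with h2 | h2
    · have : p i = q := (Nat.prime_dvd_prime_iff_eq (hp i) hq).mp (Int.natCast_dvd_natCast.mp h2)
      exact hpq i this
    · exact hpy i (hprime.dvd_of_dvd_pow h2)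
  -- parity facts
  have hxodd : Odd x := by
    rcases Int.even_or_odd x with hxe | hxo
    swap; · exact hxo
    exfalso
    obtain ⟨x1, hx1⟩ := hxe
    have hyodd : Odd y := by
      rcases Int.even_or_odd y with hye | hyo
      · exfalso
        obtain ⟨y1, hy1⟩ := hye
        exact my_not_dvd_of_gcd_one hgcd Nat.prime_two ⟨x1, by push_cast; linarith⟩
          ⟨y1, by push_cast; linarith⟩
      · exact hyo
    obtain ⟨y1, hy1⟩ := hyodd
    have hc := congrArg (fun n : ℤ => (n : ZMod 4)) heq1
    beta_reduce at hc
    push_cast at hc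
    have hP41 : ((Pn : ℕ) : ZMod 4) = 1 := by
      calc ((Pn : ℕ) : ZMod 4) = ((Pn % 4 : ℕ) : ZMod 4) := (ZMod.natCast_mod _ _).symm
        _ = 1 := by rw [hP4]; norm_num
    have hq43 : ((q : ℕ) : ZMod 4) = 3 := by
      calc ((q : ℕ) : ZMod 4) = ((q % 4 : ℕ) : ZMod 4) := (ZMod.natCast_mod _ _).symm
        _ = 3 := by rw [(by omega : q % 4 = 3)]; norm_num
    rw [hP41, hq43, hx1, hy1] at hc
    push_cast at hc
    generalize (x1 : ZMod 4) = A at hc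
    generalize (y1 : ZMod 4) = B at hc
    generalize (z : ZMod 4) = C at hc
    revert hc
    revert A B C
    decide
  have hPxodd : Odd (((Pn : ℕ) : ℤ) * x ^ 2) :=
    Odd.mul (Int.odd_coe_nat Pn |>.mpr hPodd) (hxodd.pow)
  have hzodd : Odd z := by
    rcases Int.even_or_odd z with hze | hzo
    swap; · exact hzo
    exfalso
    obtain ⟨z1, hz1⟩ := hze
    have hzz : z ^ 2 = 4 * z1 ^ 2 := by rw [hz1]; ring
    have hwe : Even w := by
      have h1 : Even (w ^ 2) := ⟨2 * z1 ^ 2 - (q : ℤ) * y ^ 2, by linarith⟩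
      rcases Int.even_or_odd w with h | h
      · exact h
      · exact absurd h1 (Int.not_even_iff_odd.mpr (h.pow))
    obtain ⟨w1, hw1⟩ := hwe
    have hww : w ^ 2 = 4 * w1 ^ 2 := by rw [hw1]; ring
    have : Even (((Pn : ℕ) : ℤ) * x ^ 2) := ⟨z1 ^ 2 + w1 ^ 2, by linarith⟩
    exact (Int.not_even_iff_odd.mpr hPxodd) this
  have hwodd : Odd w := by
    rcases Int.even_or_odd w with hwe | hwo
    swap; · exact hwo
    exfalso
    obtain ⟨w1, hw1⟩ := hwe
    have hww : w ^ 2 = 4 * w1 ^ 2 := by rw [hw1]; ring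
    have : Even (z ^ 2) := ⟨2 * w1 ^ 2 + (q : ℤ) * y ^ 2, by linarith⟩
    rcases Int.even_or_odd z with h | h
    · exact (Int.not_even_iff_odd.mpr hzodd) h
    · exact absurd this (Int.not_even_iff_odd.mpr (h.pow))
  -- y = 2 y' with y' odd
  obtain ⟨y', hy2, hy'odd⟩ : ∃ y' : ℤ, y = 2 * y' ∧ Odd y' := by
    obtain ⟨a, hxa⟩ := hxodd
    obtain ⟨c, hzc⟩ := hzodd
    have hc := congrArg (fun n : ℤ => (n : ZMod 8)) heq1
    beta_reduce at hc
    push_cast at hc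
    have hq87 : ((q : ℕ) : ZMod 8) = 7 := by
      calc ((q : ℕ) : ZMod 8) = ((q % 8 : ℕ) : ZMod 8) := (ZMod.natCast_mod _ _).symm
        _ = 7 := by rw [hq7]; norm_num
    rw [hP8z, hq87, hxa, hzc] at hc
    push_cast at hc
    have hy8 : (y : ZMod 8) = 2 ∨ (y : ZMod 8) = 6 := by
      generalize hyB : ((y : ℤ) : ZMod 8) = B
      rw [hyB] at hc
      clear hyB
      generalize (a : ZMod 8) = A at hc
      generalize (c : ZMod 8) = C at hc
      revert hc
      revert A B C
      decide
    rcases hy8 with h8 | h8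
    · have : ((8 : ℕ) : ℤ) ∣ (y - 2) := by
        apply (ZMod.intCast_zmod_eq_zero_iff_dvd _ 8).mp
        push_cast
        rw [h8]; ring
      obtain ⟨k, hk⟩ := this
      push_cast at hk
      exact ⟨4 * k + 1, by linarith, ⟨2 * k, by ring⟩⟩
    · have : ((8 : ℕ) : ℤ) ∣ (y - 6) := by
        apply (ZMod.intCast_zmod_eq_zero_iff_dvd _ 8).mp
        push_cast
        rw [h8]; ring
      obtain ⟨k, hk⟩ := this
      push_cast at hk
      exact ⟨4 * k + 3, by linarith, ⟨2 * k + 1, by ring⟩⟩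
  have hy'pos : 0 < y' := by linarith
  -- u, v
  obtain ⟨u, hu⟩ : (2 : ℤ) ∣ (z + w) := by
    obtain ⟨c, hc⟩ := hzodd; obtain ⟨d, hd⟩ := hwodd
    exact ⟨c + d + 1, by linarith⟩
  obtain ⟨v, hv⟩ : (2 : ℤ) ∣ (z - w) := by
    obtain ⟨c, hc⟩ := hzodd; obtain ⟨d, hd⟩ := hwodd
    exact ⟨c - d, by linarith⟩
  have hzuv : z = u + v := by linarith
  have hwuv : w = u - v := by linarith
  have huv : u * v = 2 * (q : ℤ) * y' ^ 2 := by
    apply mul_left_cancel₀ (show (4 : ℤ) ≠ 0 by norm_num)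
    have e1 := heq1; have e2 := heq2
    rw [hzuv] at e1; rw [hwuv] at e2; rw [hy2] at e1 e2
    linear_combination e2 - e1
  have huvpos : 0 < u * v := by rw [huv]; positivity
  have hupos : 0 < u := by nlinarith
  have hvpos : 0 < v := by nlinarith
  -- gcd facts
  have hgyz : Int.gcd y z = 1 := by
    apply my_gcd_builder
    intro r hr h1 h2
    have hrP : Prime (r : ℤ) := Nat.prime_iff_prime_int.mp hr
    have h3 : (r : ℤ) ∣ ((Pn : ℕ) : ℤ) * x ^ 2 := by
      have e : ((Pn : ℕ) : ℤ) * x ^ 2 = z ^ 2 - (q : ℤ) * y ^ 2 := by linarith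
      rw [e]
      exact dvd_sub (dvd_pow h2 two_ne_zero) ((dvd_pow h1 two_ne_zero).mul_left _)
    rcases hrP.dvd_mul.mp h3 with h4 | h4
    · obtain ⟨i, hi⟩ := hdvdP r hr (Int.natCast_dvd_natCast.mp h4)
      exact hpy i (by rw [← hi]; exact h1)
    · exact my_not_dvd_of_gcd_one hgcd hr (hrP.dvd_of_dvd_pow h4) h1
  have hgxz : Int.gcd x z = 1 := by
    apply my_gcd_builder
    intro r hr h1 h2
    have hrP : Prime (r : ℤ) := Nat.prime_iff_prime_int.mp hr
    have h3 : (r : ℤ) ∣ (q : ℤ) * y ^ 2 := by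
      have e : (q : ℤ) * y ^ 2 = z ^ 2 - ((Pn : ℕ) : ℤ) * x ^ 2 := by linarith
      rw [e]
      exact dvd_sub (dvd_pow h2 two_ne_zero) ((dvd_pow h1 two_ne_zero).mul_left _)
    rcases hrP.dvd_mul.mp h3 with h4 | h4
    · have : r = q := (Nat.prime_dvd_prime_iff_eq hr hq).mp (Int.natCast_dvd_natCast.mp h4)
      exact hqx (by rw [← this]; exact h1)
    · exact my_not_dvd_of_gcd_one hgcd hr h1 (hrP.dvd_of_dvd_pow h4)
  have hgzw : Int.gcd z w = 1 := by
    apply my_gcd_builder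
    intro r hr h1 h2
    have hrP : Prime (r : ℤ) := Nat.prime_iff_prime_int.mp hr
    have h3 : (r : ℤ) ∣ 2 * ((q : ℤ) * y ^ 2) := by
      have e : 2 * ((q : ℤ) * y ^ 2) = z ^ 2 - w ^ 2 := by linarith
      rw [e]
      exact dvd_sub (dvd_pow h1 two_ne_zero) (dvd_pow h2 two_ne_zero)
    rcases hrP.dvd_mul.mp h3 with h4 | h4
    · have : r = 2 := by
        have := (Nat.prime_dvd_prime_iff_eq hr Nat.prime_two).mp
          (Int.natCast_dvd_natCast.mp (by exact_mod_cast h4))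
        exact this
      subst this
      exact (Int.not_even_iff_odd.mpr hzodd) ⟨z / 2, by
        obtain ⟨c, hc⟩ := h1; omega⟩
    · rcases hrP.dvd_mul.mp h4 with h5 | h5
      · have hrq : r = q := (Nat.prime_dvd_prime_iff_eq hr hq).mp (Int.natCast_dvd_natCast.mp h5)
        subst hrq
        have h6 : (r : ℤ) ∣ ((Pn : ℕ) : ℤ) * x ^ 2 := by
          have e : ((Pn : ℕ) : ℤ) * x ^ 2 = z ^ 2 - (r : ℤ) * y ^ 2 := by linarith
          rw [e]
          exact dvd_sub (dvd_pow h1 two_ne_zero) ⟨y ^ 2, rfl⟩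
        rcases (Nat.prime_iff_prime_int.mp hr).dvd_mul.mp h6 with h7 | h7
        · exact hqP (Int.natCast_dvd_natCast.mp h7)
        · exact hqx ((Nat.prime_iff_prime_int.mp hr).dvd_of_dvd_pow h7)
      · exact my_not_dvd_of_gcd_one hgyz hr ((Nat.prime_iff_prime_int.mp hr).dvd_of_dvd_pow h5) h1
  have hguv : Int.gcd u v = 1 := by
    apply my_gcd_builder
    intro r hr h1 h2
    exact my_not_dvd_of_gcd_one hgzw hr (by rw [hzuv]; exact dvd_add h1 h2)
      (by rw [hwuv]; exact dvd_sub h1 h2)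
  have hgxy' : Int.gcd x y' = 1 := by
    apply my_gcd_builder
    intro r hr h1 h2
    exact my_not_dvd_of_gcd_one hgcd hr h1 (by rw [hy2]; exact h2.mul_left 2)
  have hgzy' : Int.gcd z y' = 1 := by
    apply my_gcd_builder
    intro r hr h1 h2
    exact my_not_dvd_of_gcd_one hgyz hr (by rw [hy2]; exact h2.mul_left 2) h1
  -- natAbs versions
  set zn : ℕ := z.natAbs with hznd
  set yn : ℕ := y'.natAbs with hynd
  have hznz : ((zn : ℕ) : ℤ) = z := Int.natAbs_of_nonneg hz.le
  have hynz : ((yn : ℕ) : ℤ) = y' := Int.natAbs_of_nonneg hy'pos.le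
  have hznodd : Odd zn := Int.natAbs_odd.mpr hzodd
  have hynodd : Odd yn := Int.natAbs_odd.mpr hy'odd
  -- J(z | q) = 1
  have hJzq : jacobiSym ((zn : ℕ) : ℤ) q = 1 := by
    rw [hznz, hzuv]
    exact my_L6 hq hq7 hupos hvpos hguv huv
  -- J(z | Pn) = 1
  have hJzP : jacobiSym z Pn = 1 := by
    have r1 : jacobiSym z Pn = jacobiSym ((Pn : ℕ) : ℤ) zn := by
      rw [← hznz]
      exact jacobiSym.quadratic_reciprocity_one_mod_four' hznodd hP4
    have r2 : jacobiSym ((Pn : ℕ) : ℤ) zn = jacobiSym (-((q : ℤ) * y ^ 2)) zn := by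
      rw [show jacobiSym ((Pn : ℕ) : ℤ) zn
          = jacobiSym (((Pn : ℕ) : ℤ) * x ^ 2) zn by
        rw [jacobiSym.mul_left, jacobiSym.sq_one' (by rw [hznz]; exact hgxz), mul_one]]
      apply jacobiSym.mod_left'
      exact Int.modEq_iff_dvd.mpr ⟨-z, by rw [hznz]; linear_combination -heq1⟩
    have r3 : jacobiSym (-((q : ℤ) * y ^ 2)) zn = χ₄ zn * jacobiSym ((q : ℕ) : ℤ) zn := by
      rw [jacobiSym.neg _ hznodd, jacobiSym.mul_left,
        jacobiSym.sq_one' (by rw [hznz]; exact hgyz), mul_one]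
    have r4 : jacobiSym ((q : ℕ) : ℤ) zn = χ₄ zn * jacobiSym ((zn : ℕ) : ℤ) q := by
      rw [jacobiSym.quadratic_reciprocity hqodd hznodd]
      congr 1
      have hq2' : Odd (q / 2) := by
        rw [Nat.odd_iff]; omega
      rw [ZMod.χ₄_eq_neg_one_pow (Nat.odd_iff.mp hznodd), pow_mul, hq2'.neg_one_pow]
    have hχ₄sq : χ₄ zn * χ₄ zn = 1 := by
      rw [ZMod.χ₄_eq_neg_one_pow (Nat.odd_iff.mp hznodd), ← pow_add]
      exact Even.neg_one_pow ⟨zn / 2, rfl⟩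
    rw [r1, r2, r3, r4, hJzq, mul_one]; exact hχ₄sq
  -- J(y | Pn) = -1
  have hJyP : jacobiSym y Pn = -1 := by
    have hy'1 : jacobiSym y' Pn = 1 := by
      have r1 : jacobiSym y' Pn = jacobiSym ((Pn : ℕ) : ℤ) yn := by
        rw [← hynz]
        exact jacobiSym.quadratic_reciprocity_one_mod_four' hynodd hP4
      have r2 : jacobiSym ((Pn : ℕ) : ℤ) yn = jacobiSym (z ^ 2) yn := by
        rw [show jacobiSym ((Pn : ℕ) : ℤ) yn
            = jacobiSym (((Pn : ℕ) : ℤ) * x ^ 2) yn by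
          rw [jacobiSym.mul_left, jacobiSym.sq_one' (by rw [hynz]; exact hgxy'), mul_one]]
        apply jacobiSym.mod_left'
        refine Int.modEq_iff_dvd.mpr ⟨4 * (q : ℤ) * y', ?_⟩
        rw [hynz]
        linear_combination -heq1 + (q : ℤ) * (y + 2 * y') * hy2
      rw [r1, r2, jacobiSym.sq_one' (by rw [hynz]; exact Int.gcd_comm z y' ▸ hgzy')]
    have h2 : jacobiSym 2 Pn = -1 := by
      rw [jacobiSym.at_two hPodd, ZMod.χ₈_nat_eq_if_mod_eight]
      simp [Nat.odd_iff.mp hPodd, hP8]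
    rw [hy2, jacobiSym.mul_left, h2, hy'1, mul_one]
  -- per prime translation
  have hmodp : ∀ i, ((q : ℕ) : ZMod (p i)) * ((y : ℤ) : ZMod (p i)) ^ 2
      = ((z : ℤ) : ZMod (p i)) ^ 2 := by
    intro i
    have h0 : (((Pn : ℕ) : ℤ) : ZMod (p i)) = 0 := by
      rw [Int.cast_natCast]
      rw [ZMod.natCast_eq_zero_iff]
      exact Finset.dvd_prod_of_mem p (mem_univ i)
    have hc := congrArg (fun n : ℤ => (n : ZMod (p i))) heq1
    beta_reduce at hc
    push_cast at hc
    push_cast at h0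
    linear_combination hc - ((x : ℤ) : ZMod (p i)) ^ 2 * h0
  have hgzyp : ∀ i : Fin t, Int.gcd (z * y) (p i) = 1 := by
    intro i
    apply my_gcd_builder
    intro r hr h1 h2
    have hrp : r = p i := (Nat.prime_dvd_prime_iff_eq hr (hp i)).mp (Int.natCast_dvd_natCast.mp h2)
    subst hrp
    rcases (Nat.prime_iff_prime_int.mp hr).dvd_mul.mp h1 with h3 | h3
    · exact hpz _ h3
    · exact hpy _ h3
  have hkey : ∀ i : Fin t, ((q : ZMod (p i)) ^ ((p i - 1) / 4) = -1 ↔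
      jacobiSym (z * y) (p i) = -1) := by
    intro i
    haveI : Fact (p i).Prime := ⟨hp i⟩
    have hyne : ((y : ℤ) : ZMod (p i)) ≠ 0 := fun h0 =>
      hpy i ((ZMod.intCast_zmod_eq_zero_iff_dvd _ _).mp h0)
    have hzne : ((z : ℤ) : ZMod (p i)) ≠ 0 := fun h0 =>
      hpz i ((ZMod.intCast_zmod_eq_zero_iff_dvd _ _).mp h0)
    have hpp := my_per_prime (hp i) (hp5 i) (hmodp i) hyne hzne
    have htri := jacobiSym.eq_one_or_neg_one (hgzyp i)
    have hneone : ((1 : ZMod (p i))) ≠ -1 := by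
      intro h
      have h5 : Fact (2 < p i) := ⟨by have := hp5 i; have := (hp i).two_le; omega⟩
      exact ZMod.neg_one_ne_one h.symm
    constructor
    · intro h
      rcases htri with h1 | h1
      · exfalso
        rw [h1] at hpp
        rw [h] at hpp
        push_cast at hpp
        exact hneone hpp.symm
      · exact h1
    · intro h
      rw [h] at hpp
      push_cast at hpp
      rw [hpp]
  -- finish
  have hfilter : (univ.filter fun i => (q : ZMod (p i)) ^ ((p i - 1) / 4) = -1)
      = univ.filter (fun i => jacobiSym (z * y) (p i) = -1) :=
    Finset.filter_congr fun i _ => hkey i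
  rw [hfilter]
  apply my_odd_card_filter
  · intro i _
    exact jacobiSym.eq_one_or_neg_one (hgzyp i)
  · rw [← my_jacobi_prod_right _ _ _ (fun i _ => (hp i).pos.ne')]
    rw [← hPnd]
    rw [jacobiSym.mul_left, hJzP, hJyP, one_mul]


/-- Let `t` be odd and `p_1, …, p_t, q` distinct primes with `p_i ≡ 5 (mod 8)`,
`q ≡ 7 (mod 8)` and Legendre symbol `(q / p_i) = 1` for all `i`; set `P = p_1 ⋯ p_t`.
If there are nonzero integers `x, y, z, w` with `gcd(x, y) = 1` satisfying
`P x² + q y² = z²` and `P x² − q y² = w²`, then the quartic residue symbol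
`(q / P)₄ = -1`, i.e. the number of indices `i` with
`q^((p_i - 1)/4) ≡ -1 (mod p_i)` is odd. -/
theorem stmt12 (t : ℕ) (ht : Odd t)
    (p : Fin t → ℕ) (q : ℕ)
    (hp : ∀ i, (p i).Prime) (hq : q.Prime)
    (hinj : Function.Injective p) (hpq : ∀ i, p i ≠ q)
    (hp5 : ∀ i, p i % 8 = 5) (hq7 : q % 8 = 7)
    (hleg : ∀ i, jacobiSym q (p i) = 1)
    (x y z w : ℤ) (hx : x ≠ 0) (hy : y ≠ 0) (hz : z ≠ 0) (hw : w ≠ 0)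
    (hgcd : Int.gcd x y = 1)
    (heq1 : (∏ i, (p i : ℤ)) * x ^ 2 + (q : ℤ) * y ^ 2 = z ^ 2)
    (heq2 : (∏ i, (p i : ℤ)) * x ^ 2 - (q : ℤ) * y ^ 2 = w ^ 2) :
    Odd (univ.filter fun i => (q : ZMod (p i)) ^ ((p i - 1) / 4) = -1).card := by
  refine my_aux t ht p q hp hq hinj hpq hp5 hq7 (|x|) (|y|) (|z|) (|w|)
    (abs_pos.mpr hx) (abs_pos.mpr hy) (abs_pos.mpr hz) (abs_pos.mpr hw) ?_ ?_ ?_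
  · have : Int.gcd |x| |y| = Int.gcd x y := by simp [Int.gcd, Int.natAbs_abs]
    rw [this]; exact hgcd
  · rw [sq_abs, sq_abs, sq_abs]; exact heq1
  · rw [sq_abs, sq_abs, sq_abs]; exact heq2
end

section
/- Let t be an odd positive integer and let p_1, …, p_t, q be distinct primes with p_i ≡ 5 (mod 8) for all i and q ≡ 7 (mod 8), and suppose the Legendre symbol (q/p_i) = 1 for all i; set P = p_1⋯p_t. If there exist nonzero integers x, y, z, w with gcd(x, y) = 1 satisfying Px² + y² = z² and Px² − y² = qw², then the quartic residue symbol (q/P)_4 = −1, i.e., the number of indices i ∈ {1,…,t} with q^{(p_i−1)/4} ≡ −1 (mod p_i) is odd. -/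
open Finset

/-- Let `t` be odd and `p_1, …, p_t, q` distinct primes with `p_i ≡ 5 (mod 8)`,
`q ≡ 7 (mod 8)` and Legendre symbol `(q / p_i) = 1` for all `i`; set `P = p_1 ⋯ p_t`.
If there are nonzero integers `x, y, z, w` with `gcd(x, y) = 1` satisfying
`P x² + y² = z²` and `P x² − y² = q w²`, then the quartic residue symbol
`(q / P)₄ = -1`, i.e. the number of indices `i` with
`q^((p_i - 1)/4) ≡ -1 (mod p_i)` is odd. -/
theorem stmt14 (t : ℕ) (ht : Odd t)
    (p : Fin t → ℕ) (q : ℕ)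
    (hp : ∀ i, (p i).Prime) (hq : q.Prime)
    (hinj : Function.Injective p) (hpq : ∀ i, p i ≠ q)
    (hp5 : ∀ i, p i % 8 = 5) (hq7 : q % 8 = 7)
    (hleg : ∀ i, jacobiSym q (p i) = 1)
    (x y z w : ℤ) (hx : x ≠ 0) (hy : y ≠ 0) (hz : z ≠ 0) (hw : w ≠ 0)
    (hgcd : Int.gcd x y = 1)
    (heq1 : (∏ i, (p i : ℤ)) * x ^ 2 + y ^ 2 = z ^ 2)
    (heq2 : (∏ i, (p i : ℤ)) * x ^ 2 - y ^ 2 = (q : ℤ) * w ^ 2) :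
    Odd (univ.filter fun i => (q : ZMod (p i)) ^ ((p i - 1) / 4) = -1).card := by
  have instp : ∀ i, Fact (p i).Prime := fun i => ⟨hp i⟩
  set Pn : ℕ := ∏ i, p i with hPn
  have hPcast : (∏ i, (p i : ℤ)) = (Pn : ℤ) := by push_cast [hPn]; rfl
  rw [hPcast] at heq1 heq2
  have hPdvd : ∀ i, p i ∣ Pn := fun i => Finset.dvd_prod_of_mem _ (mem_univ i)
  have hp4 : ∀ i, p i % 4 = 1 := by
    intro i
    have := Nat.mod_mod_of_dvd (p i) (by norm_num : (4:ℕ) ∣ 8)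
    rw [hp5 i] at this
    omega
  have hP4 : Pn % 4 = 1 := by
    rw [hPn, Finset.prod_nat_mod]
    simp only [hp4]
    simp
  have hPodd : Odd Pn := by
    rw [Nat.odd_iff]
    have := Nat.mod_mod_of_dvd Pn (by norm_num : (2:ℕ) ∣ 4)
    omega
  -- Step 1: parity analysis modulo 8: `y` and `w` are odd
  have hP8 : ((Pn : ℕ) : ZMod 8) = 5 := by
    rw [hPn]
    push_cast
    have h5 : ∀ i : Fin t, ((p i : ℕ) : ZMod 8) = 5 := by
      intro i
      rw [← ZMod.natCast_mod, hp5 i]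
      rfl
    rw [Finset.prod_congr rfl (fun i _ => h5 i), Finset.prod_const, Finset.card_univ,
      Fintype.card_fin]
    obtain ⟨k, hk⟩ := ht
    subst hk
    rw [pow_add, pow_mul, show ((5:ZMod 8)^2 = 1) from by decide, one_pow, pow_one, one_mul]
  have hparity : Odd y.natAbs ∧ Odd w.natAbs := by
    have key : ∀ X Y Z W : ZMod 8, 5 * X^2 + Y^2 = Z^2 → 5 * X^2 - Y^2 = 7 * W^2 →
        ¬((ZMod.castHom (by norm_num : (2:ℕ) ∣ 8) (ZMod 2)) X = 0 ∧
          (ZMod.castHom (by norm_num : (2:ℕ) ∣ 8) (ZMod 2)) Y = 0) →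
        ((ZMod.castHom (by norm_num : (2:ℕ) ∣ 8) (ZMod 2)) Y ≠ 0 ∧
         (ZMod.castHom (by norm_num : (2:ℕ) ∣ 8) (ZMod 2)) W ≠ 0) := by decide
    have hq8 : ((q : ℕ) : ZMod 8) = 7 := by rw [← ZMod.natCast_mod, hq7]; rfl
    have h81 : (5 : ZMod 8) * (x : ZMod 8)^2 + (y : ZMod 8)^2 = (z : ZMod 8)^2 := by
      have := congrArg (fun n : ℤ => (n : ZMod 8)) heq1
      push_cast at this
      rwa [hP8] at this
    have h82 : (5 : ZMod 8) * (x : ZMod 8)^2 - (y : ZMod 8)^2 = 7 * (w : ZMod 8)^2 := by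
      have := congrArg (fun n : ℤ => (n : ZMod 8)) heq2
      push_cast at this
      rwa [hP8, hq8] at this
    have hcop : ¬((ZMod.castHom (by norm_num : (2:ℕ) ∣ 8) (ZMod 2)) (x : ZMod 8) = 0 ∧
        (ZMod.castHom (by norm_num : (2:ℕ) ∣ 8) (ZMod 2)) (y : ZMod 8) = 0) := by
      rw [map_intCast, map_intCast]
      rintro ⟨hx0, hy0⟩
      rw [ZMod.intCast_zmod_eq_zero_iff_dvd] at hx0 hy0
      have : (2 : ℤ) ∣ (Int.gcd x y : ℤ) :=
        Int.dvd_coe_gcd (by exact_mod_cast hx0) (by exact_mod_cast hy0)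
      rw [hgcd] at this
      norm_num at this
    obtain ⟨hy2, hw2⟩ := key _ _ _ _ h81 h82 hcop
    rw [map_intCast] at hy2 hw2
    rw [Ne, ZMod.intCast_zmod_eq_zero_iff_dvd] at hy2 hw2
    constructor
    · rw [Int.natAbs_odd, Int.odd_iff]
      omega
    · rw [Int.natAbs_odd, Int.odd_iff]
      omega
  obtain ⟨hyodd, hwodd⟩ := hparity
  -- Step 2: divisibility and coprimality facts
  have hpz : ∀ i, Prime (p i : ℤ) := fun i => Nat.prime_iff_prime_int.mp (hp i)
  have hno : ∀ r : ℕ, r.Prime → (r : ℤ) ∣ x → (r : ℤ) ∣ y → False := by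
    intro r hr hrx hry
    have : (r : ℤ) ∣ (Int.gcd x y : ℤ) := Int.dvd_coe_gcd hrx hry
    rw [hgcd] at this
    exact (Nat.prime_iff_prime_int.mp hr).not_dvd_one this
  have L1 : ∀ i, ¬ (p i : ℤ) ∣ y := by
    intro i hdy
    have hdP : (p i : ℤ) ∣ (Pn : ℤ) := by exact_mod_cast hPdvd i
    have hdqw : (p i : ℤ) ∣ (q : ℤ) * w ^ 2 := by
      rw [← heq2]
      exact dvd_sub (hdP.mul_right _) ((hdy.pow (by norm_num)))
    have hdw : (p i : ℤ) ∣ w := by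
      rcases (hpz i).dvd_mul.mp hdqw with h | h
      · exact absurd ((Nat.prime_dvd_prime_iff_eq (hp i) hq).mp (by exact_mod_cast h)) (hpq i)
      · exact (hpz i).dvd_of_dvd_pow h
    have hsq : ((p i : ℤ))^2 ∣ (Pn : ℤ) * x ^ 2 := by
      have h1 : ((p i : ℤ))^2 ∣ y ^ 2 := pow_dvd_pow_of_dvd hdy 2
      have h2 : ((p i : ℤ))^2 ∣ (q : ℤ) * w ^ 2 := (pow_dvd_pow_of_dvd hdw 2).mul_left _
      have : (Pn : ℤ) * x ^ 2 = (q : ℤ) * w ^ 2 + y ^ 2 := by linarith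
      rw [this]; exact dvd_add h2 h1
    set R : ℕ := ∏ j ∈ univ.erase i, p j with hR
    have hPR : Pn = p i * R := by
      rw [hPn, hR, Finset.mul_prod_erase _ _ (mem_univ i)]
    have hpR : ¬ (p i : ℤ) ∣ (R : ℤ) := by
      intro h
      have : p i ∣ R := by exact_mod_cast h
      obtain ⟨j, hj, hdj⟩ := ((Nat.prime_iff_prime_int.mp (hp i)).dvd_finset_prod_iff
        (fun j => (p j : ℤ))).mp (by exact_mod_cast this)
      have : p i = p j := (Nat.prime_dvd_prime_iff_eq (hp i) (hp j)).mp (by exact_mod_cast hdj)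
      exact (Finset.mem_erase.mp hj).1 (hinj this).symm
    have hdx : (p i : ℤ) ∣ x := by
      have h1 : ((p i : ℤ)) ∣ (R : ℤ) * x ^ 2 := by
        have hne : (p i : ℤ) ≠ 0 := by exact_mod_cast (hp i).pos.ne'
        obtain ⟨c, hc⟩ := hsq
        rw [hPR] at hc
        push_cast at hc
        have hkey : (p i : ℤ) * ((R : ℤ) * x ^ 2) = (p i : ℤ) * ((p i : ℤ) * c) := by
          linear_combination hc
        exact ⟨c, mul_left_cancel₀ hne hkey⟩
      rcases (hpz i).dvd_mul.mp h1 with h | h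
      · exact absurd h hpR
      · exact (hpz i).dvd_of_dvd_pow h
    exact hno (p i) (hp i) hdx hdy
  have L2 : ∀ i, ¬ (p i : ℤ) ∣ w := by
    intro i hdw
    apply L1 i
    have hdP : (p i : ℤ) ∣ (Pn : ℤ) := by exact_mod_cast hPdvd i
    have : (p i : ℤ) ∣ y ^ 2 := by
      have : y ^ 2 = (Pn : ℤ) * x ^ 2 - (q : ℤ) * w ^ 2 := by linarith
      rw [this]
      exact dvd_sub (hdP.mul_right _) ((hdw.pow (by norm_num)).mul_left _)
    exact (hpz i).dvd_of_dvd_pow this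
  have exP : ∀ a b : ℤ, Int.gcd a b ≠ 1 → ∃ r : ℕ, r.Prime ∧ (r : ℤ) ∣ a ∧ (r : ℤ) ∣ b := by
    intro a b h
    obtain ⟨r, hr, hrd⟩ := Nat.exists_prime_and_dvd h
    exact ⟨r, hr, (Int.natCast_dvd_natCast.mpr hrd).trans (Int.gcd_dvd_left a b),
      (Int.natCast_dvd_natCast.mpr hrd).trans (Int.gcd_dvd_right a b)⟩
  have hprP : ∀ r : ℕ, r.Prime → (r : ℤ) ∣ (Pn : ℤ) → ∃ i, r = p i := by
    intro r hr h
    have hr' : r ∣ Pn := by exact_mod_cast h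
    rw [hPn] at hr'
    obtain ⟨j, _, hdj⟩ := (hr.prime.dvd_finset_prod_iff p).mp hr'
    exact ⟨j, (Nat.prime_dvd_prime_iff_eq hr (hp j)).mp hdj⟩
  have Gzy : Int.gcd z y = 1 := by
    by_contra h
    obtain ⟨r, hr, hrz, hry⟩ := exP _ _ h
    have : (r : ℤ) ∣ (Pn : ℤ) * x ^ 2 := by
      have : (Pn : ℤ) * x ^ 2 = z ^ 2 - y ^ 2 := by linarith
      rw [this]
      exact dvd_sub (hrz.pow (by norm_num)) (hry.pow (by norm_num))
    rcases (Nat.prime_iff_prime_int.mp hr).dvd_mul.mp this with h' | h'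
    · obtain ⟨i, rfl⟩ := hprP r hr h'
      exact L1 i hry
    · exact hno r hr ((Nat.prime_iff_prime_int.mp hr).dvd_of_dvd_pow h') hry
  have Gyw : Int.gcd y w = 1 := by
    by_contra h
    obtain ⟨r, hr, hry, hrw⟩ := exP _ _ h
    have : (r : ℤ) ∣ (Pn : ℤ) * x ^ 2 := by
      have : (Pn : ℤ) * x ^ 2 = (q : ℤ) * w ^ 2 + y ^ 2 := by linarith
      rw [this]
      exact dvd_add ((hrw.pow (by norm_num)).mul_left _) (hry.pow (by norm_num))
    rcases (Nat.prime_iff_prime_int.mp hr).dvd_mul.mp this with h' | h'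
    · obtain ⟨i, rfl⟩ := hprP r hr h'
      exact L1 i hry
    · exact hno r hr ((Nat.prime_iff_prime_int.mp hr).dvd_of_dvd_pow h') hry
  have Gxw : Int.gcd x w = 1 := by
    by_contra h
    obtain ⟨r, hr, hrx, hrw⟩ := exP _ _ h
    have : (r : ℤ) ∣ y ^ 2 := by
      have : y ^ 2 = (Pn : ℤ) * x ^ 2 - (q : ℤ) * w ^ 2 := by linarith
      rw [this]
      exact dvd_sub ((hrx.pow (by norm_num)).mul_left _) ((hrw.pow (by norm_num)).mul_left _)
    exact hno r hr hrx ((Nat.prime_iff_prime_int.mp hr).dvd_of_dvd_pow this)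
  -- Step 3: Jacobi symbols (y/P) and (w/P) are 1, via quadratic reciprocity
  have gcd_abs : ∀ a b : ℤ, Int.gcd a b = 1 → Int.gcd a (b.natAbs : ℤ) = 1 := by
    intro a b h
    simpa [Int.gcd, Int.natAbs_abs] using h
  have hJy : jacobiSym y Pn = 1 := by
    have hPy : jacobiSym (Pn : ℤ) y.natAbs = 1 := by
      have hmod : ((Pn : ℤ) * x ^ 2) % (y.natAbs : ℤ) = (z ^ 2) % (y.natAbs : ℤ) := by
        have hdvd : ((y.natAbs : ℤ)) ∣ z ^ 2 - (Pn : ℤ) * x ^ 2 := by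
          rw [show z ^ 2 - (Pn : ℤ) * x ^ 2 = y ^ 2 by linarith]
          exact Int.natAbs_dvd.mpr (dvd_pow_self y two_ne_zero)
        exact Int.modEq_iff_dvd.mpr hdvd
      have h1 := jacobiSym.mod_left' hmod
      rw [jacobiSym.mul_left, jacobiSym.pow_left,
        jacobiSym.sq_one (gcd_abs x y hgcd),
        jacobiSym.sq_one' (gcd_abs z y Gzy), mul_one] at h1
      exact h1
    have hrec := jacobiSym.quadratic_reciprocity_one_mod_four' hyodd hP4
    rcases Int.natAbs_eq y with h | h
    · rw [h, hrec, hPy]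
    · rw [h, jacobiSym.neg _ hPodd, ZMod.χ₄_nat_one_mod_four hP4, one_mul, hrec, hPy]
  have hJw : jacobiSym w Pn = 1 := by
    have hPw : jacobiSym (Pn : ℤ) w.natAbs = 1 := by
      have hmod : ((Pn : ℤ) * x ^ 2) % (w.natAbs : ℤ) = (y ^ 2) % (w.natAbs : ℤ) := by
        have hdvd : ((w.natAbs : ℤ)) ∣ y ^ 2 - (Pn : ℤ) * x ^ 2 := by
          rw [show y ^ 2 - (Pn : ℤ) * x ^ 2 = -((q:ℤ) * w ^ 2) by linarith]
          exact (Int.natAbs_dvd.mpr ((dvd_pow_self w two_ne_zero).mul_left _)).neg_right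
        exact Int.modEq_iff_dvd.mpr hdvd
      have h1 := jacobiSym.mod_left' hmod
      rw [jacobiSym.mul_left, jacobiSym.pow_left,
        jacobiSym.sq_one (gcd_abs x w Gxw),
        jacobiSym.sq_one' (gcd_abs y w Gyw), mul_one] at h1
      exact h1
    have hrec := jacobiSym.quadratic_reciprocity_one_mod_four' hwodd hP4
    rcases Int.natAbs_eq w with h | h
    · rw [h, hrec, hPw]
    · rw [h, jacobiSym.neg _ hPodd, ZMod.χ₄_nat_one_mod_four hP4, one_mul, hrec, hPw]
  -- Step 4: per-prime characterization of the quartic residue condition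
  have hYW : ∀ i, ((y * w : ℤ) : ZMod (p i)) ≠ 0 := by
    intro i
    haveI := instp i
    have hY : ((y : ℤ) : ZMod (p i)) ≠ 0 :=
      fun h => L1 i ((ZMod.intCast_zmod_eq_zero_iff_dvd _ _).mp h)
    have hW : ((w : ℤ) : ZMod (p i)) ≠ 0 :=
      fun h => L2 i ((ZMod.intCast_zmod_eq_zero_iff_dvd _ _).mp h)
    push_cast
    exact mul_ne_zero hY hW
  have hchar : ∀ i, ((q : ZMod (p i)) ^ ((p i - 1) / 4) = -1 ↔
      legendreSym (p i) (y * w) = 1) := by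
    intro i
    haveI := instp i
    obtain ⟨k, hk⟩ : ∃ k, p i = 8 * k + 5 := ⟨p i / 8, by have := hp5 i; omega⟩
    have hY : ((y : ℤ) : ZMod (p i)) ≠ 0 :=
      fun h => L1 i ((ZMod.intCast_zmod_eq_zero_iff_dvd _ _).mp h)
    have hW : ((w : ℤ) : ZMod (p i)) ≠ 0 :=
      fun h => L2 i ((ZMod.intCast_zmod_eq_zero_iff_dvd _ _).mp h)
    have hP0 : ((Pn : ℕ) : ZMod (p i)) = 0 :=
      (ZMod.natCast_eq_zero_iff _ _).mpr (hPdvd i)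
    have hqK : (q : ZMod (p i)) * (w : ZMod (p i)) ^ 2 = -(y : ZMod (p i)) ^ 2 := by
      have h := congrArg (fun n : ℤ => (n : ZMod (p i))) heq2
      push_cast at h
      rw [hP0] at h
      linear_combination -h
    have hpow : (q : ZMod (p i)) ^ (2*k+1) * (w : ZMod (p i)) ^ (4*k+2)
        = -(y : ZMod (p i)) ^ (4*k+2) := by
      have h := congrArg (· ^ (2*k+1)) hqK
      simp only [mul_pow] at h
      rw [← pow_mul, Odd.neg_pow ⟨k, by ring⟩, ← pow_mul] at h
      rw [show 4*k+2 = 2*(2*k+1) by ring]; exact h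
    have hWone : (w : ZMod (p i)) ^ (8*k+4) = 1 := by
      have h := ZMod.pow_card_sub_one_eq_one hW
      rwa [show p i - 1 = 8*k+4 by omega] at h
    have hL : ((legendreSym (p i) (y * w) : ℤ) : ZMod (p i))
        = (y : ZMod (p i)) ^ (4*k+2) * (w : ZMod (p i)) ^ (4*k+2) := by
      rw [legendreSym.eq_pow]
      push_cast
      rw [mul_pow, show p i / 2 = 4*k+2 by omega]
    have hqval : (q : ZMod (p i)) ^ (2*k+1)
        = -((legendreSym (p i) (y * w) : ℤ) : ZMod (p i)) := by
      calc (q : ZMod (p i)) ^ (2*k+1)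
          = (q : ZMod (p i)) ^ (2*k+1) * (w : ZMod (p i)) ^ (8*k+4) := by rw [hWone, mul_one]
        _ = ((q : ZMod (p i)) ^ (2*k+1) * (w : ZMod (p i)) ^ (4*k+2))
              * (w : ZMod (p i)) ^ (4*k+2) := by
            rw [mul_assoc, ← pow_add, show 4*k+2+(4*k+2) = 8*k+4 by ring]
        _ = -((y : ZMod (p i)) ^ (4*k+2) * (w : ZMod (p i)) ^ (4*k+2)) := by
            rw [hpow]; ring
        _ = -((legendreSym (p i) (y * w) : ℤ) : ZMod (p i)) := by rw [hL]
    haveI : Fact (2 < p i) := ⟨by omega⟩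
    have hne : (-1 : ZMod (p i)) ≠ 1 := ZMod.neg_one_ne_one
    rw [show (p i - 1) / 4 = 2*k+1 by omega, hqval]
    rcases legendreSym.eq_one_or_neg_one (p := p i) (hYW i) with hL1 | hL1
    · rw [hL1]
      norm_num
    · rw [hL1]
      simp only [Int.cast_neg, Int.cast_one, neg_neg]
      constructor
      · intro h
        exact absurd h.symm hne
      · intro h
        norm_num at h
  -- Step 5: multiply everything together
  have hprod : ∀ s : Finset (Fin t),
      jacobiSym (y * w) (∏ i ∈ s, p i) = ∏ i ∈ s, legendreSym (p i) (y * w) := by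
    intro s
    induction s using Finset.cons_induction with
    | empty => simp
    | cons a s ha ih =>
        haveI := instp a
        rw [Finset.prod_cons, Finset.prod_cons,
          jacobiSym.mul_right' _ (hp a).pos.ne'
            (Finset.prod_pos fun j _ => (hp j).pos).ne', ih,
          jacobiSym.legendreSym.to_jacobiSym]
  have hprodval : ∏ i, legendreSym (p i) (y * w) = 1 := by
    rw [← hprod univ, ← hPn, jacobiSym.mul_left, hJy, hJw, mul_one]
  have hfilter : (univ.filter fun i => (q : ZMod (p i)) ^ ((p i - 1) / 4) = -1)
      = univ.filter fun i => legendreSym (p i) (y * w) = 1 :=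
    Finset.filter_congr fun i _ => hchar i
  rw [hfilter]
  have hsplit := Finset.prod_filter_mul_prod_filter_not univ
    (fun i => legendreSym (p i) (y * w) = 1) (fun i => legendreSym (p i) (y * w))
  rw [hprodval] at hsplit
  have h1 : ∏ i ∈ univ.filter (fun i => legendreSym (p i) (y * w) = 1),
      legendreSym (p i) (y * w) = 1 :=
    Finset.prod_eq_one fun i hi => (Finset.mem_filter.mp hi).2
  have h2 : ∏ i ∈ univ.filter (fun i => ¬legendreSym (p i) (y * w) = 1),
      legendreSym (p i) (y * w)
      = (-1 : ℤ) ^ (univ.filter (fun i => ¬legendreSym (p i) (y * w) = 1)).card := by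
    rw [Finset.prod_congr rfl fun i hi => ?_, Finset.prod_const]
    rcases legendreSym.eq_one_or_neg_one (p := p i) (hYW i) with h | h
    · exact absurd h (Finset.mem_filter.mp hi).2
    · exact h
  rw [h1, one_mul, h2] at hsplit
  have heven : Even (univ.filter (fun i => ¬legendreSym (p i) (y * w) = 1)).card :=
    (neg_one_pow_eq_one_iff_even (by norm_num)).mp hsplit
  have hcards := Finset.card_filter_add_card_filter_not
    (s := (univ : Finset (Fin t))) (p := fun i => legendreSym (p i) (y * w) = 1)
  rw [Finset.card_univ, Fintype.card_fin] at hcards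
  rw [Nat.odd_iff] at ht ⊢
  rw [Nat.even_iff] at heven
  omega
end

section
/- For every positive integer n, there exist positive rational numbers a, b, c with a² + b² = c² and ab = 2n if and only if there exist rational numbers x, y with y ≠ 0 and y² = x³ − n²x. -/
/-- `n` is a congruent number: it is the area of a right triangle with rational sides. -/
def IsCongruentNum (n : ℕ) : Prop :=
  ∃ a b c : ℚ, 0 < a ∧ 0 < b ∧ 0 < c ∧ a ^ 2 + b ^ 2 = c ^ 2 ∧ a * b = 2 * n

/-- A positive integer `n` is a congruent number iff the curve `y² = x³ − n² x` has a
rational point with `y ≠ 0`. -/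
theorem stmt16 (n : ℕ) (hn : 0 < n) :
    IsCongruentNum n ↔
      ∃ x y : ℚ, y ≠ 0 ∧ y ^ 2 = x ^ 3 - (n : ℚ) ^ 2 * x := by
  have hnq : (0 : ℚ) < (n : ℚ) := by exact_mod_cast hn
  constructor
  · rintro ⟨a, b, c, ha, hb, hc, habc, hab⟩
    refine ⟨(n : ℚ) * (a + c) / b, 2 * (n : ℚ) ^ 2 * (a + c) / b ^ 2, ?_, ?_⟩
    · positivity
    · have hb' : b ≠ 0 := ne_of_gt hb
      field_simp
      linear_combination b * habc - 2 * (a + c) * hab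
  · rintro ⟨x, y, hy, heq⟩
    have hy2 : y ^ 2 = x * (x ^ 2 - (n : ℚ) ^ 2) := by linear_combination heq
    have hysq : (0 : ℚ) < y ^ 2 := by positivity
    have hx : x ≠ 0 := by
      intro h
      apply hy
      have hz : y ^ 2 = 0 := by rw [hy2, h]; ring
      exact pow_eq_zero_iff two_ne_zero |>.mp hz
    have hxn : x ^ 2 - (n : ℚ) ^ 2 ≠ 0 := by
      intro h
      apply hy
      have hz : y ^ 2 = 0 := by rw [hy2, h]; ring
      exact pow_eq_zero_iff two_ne_zero |>.mp hz
    refine ⟨|(x ^ 2 - (n : ℚ) ^ 2) / y|, |2 * (n : ℚ) * x / y|,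
      (x ^ 2 + (n : ℚ) ^ 2) / |y|, ?_, ?_, ?_, ?_, ?_⟩
    · exact abs_pos.mpr (div_ne_zero hxn hy)
    · exact abs_pos.mpr (div_ne_zero (by positivity) hy)
    · exact div_pos (by positivity) (abs_pos.mpr hy)
    · rw [sq_abs, sq_abs, div_pow, div_pow, div_pow, sq_abs]
      field_simp
      ring
    · rw [← abs_mul]
      have key : (x ^ 2 - (n : ℚ) ^ 2) / y * (2 * (n : ℚ) * x / y) = 2 * (n : ℚ) := by
        field_simp
        linear_combination (-1 : ℚ) * hy2
      rw [key, abs_of_pos (by positivity)]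
end
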